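/- arXiv:2512.12329 — 6 statements merged into one kernel-verified Lean document; each statement's English description precedes it below -/
import Mathlib

section
/- Let G be a finite graph, w a normal weighting of G, and let X, Y ⊆ V(G) and Z ⊆ X. Suppose X ∪ Y is a w-balanced separator of G but Z is not, and let B be the heavy component of G - Z. Then the set S := (N[B] ∩ X) ∪ Y is a w-balanced separator of G. -/
open SimpleGraph

variable {V : Type}

/-- `u` and `v` are connected by a walk in `G` avoiding `S`
(i.e., they lie in the same component of `G - S`). -/
def ReachOutside (G : SimpleGraph V) (S : Set V) (u v : V) : Prop :=
  ∃ p : G.Walk u v, ∀ x ∈ p.support, x ∉ S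

/-- Total weight of a vertex set. -/
noncomputable def setWeight [Finite V] (w : V → ℝ) (A : Set V) : ℝ :=
  ∑ v ∈ (Set.toFinite A).toFinset, w v

/-- `S` is a `w`-balanced separator of `G`: every component of `G - S`
has weight at most half the total weight. -/
def IsBalancedSep [Finite V] (G : SimpleGraph V) (w : V → ℝ) (S : Set V) : Prop :=
  ∀ v, v ∉ S → setWeight w {u | ReachOutside G S u v} ≤ setWeight w (Set.univ : Set V) / 2

/-- Closed neighbourhood `N[A]` of a vertex set. -/
def closedNbhd (G : SimpleGraph V) (A : Set V) : Set V :=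
  A ∪ {x | ∃ a ∈ A, G.Adj a x}

/-- `S` separates `A` from `B` in `G`: every walk from `A` to `B` meets `S`. -/
def Separates (G : SimpleGraph V) (S A B : Set V) : Prop :=
  ∀ a ∈ A, ∀ b ∈ B, ∀ p : G.Walk a b, ∃ x ∈ p.support, x ∈ S

/-- `C` is (the vertex set of) an induced cycle of `G`: the induced subgraph is
connected and every vertex of `C` has exactly two neighbours in `C`. -/
def IsInducedCycle (G : SimpleGraph V) (C : Set V) : Prop :=
  (G.induce C).Connected ∧ ∀ x ∈ C, (G.neighborSet x ∩ C).ncard = 2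

/-- `H` is an induced minor of `G`. -/
def IsInducedMinor {W : Type} (H : SimpleGraph W) (G : SimpleGraph V) : Prop :=
  ∃ X : W → Set V,
    (∀ a, (G.induce (X a)).Connected) ∧
    (Pairwise fun a b => Disjoint (X a) (X b)) ∧
    ∀ a b, a ≠ b → ((∃ u ∈ X a, ∃ v ∈ X b, G.Adj u v) ↔ H.Adj a b)

/-- `H` is a minor of `G`. -/
def IsMinor {W : Type} (H : SimpleGraph W) (G : SimpleGraph V) : Prop :=
  ∃ X : W → Set V,
    (∀ a, (G.induce (X a)).Connected) ∧
    (Pairwise fun a b => Disjoint (X a) (X b)) ∧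
    ∀ a b, H.Adj a b → ∃ u ∈ X a, ∃ v ∈ X b, G.Adj u v

/-- The `ℓ`-wheel: a cycle of length `ℓ` plus a universal vertex (`none`). -/
def wheel (ℓ : ℕ) : SimpleGraph (Option (ZMod ℓ)) :=
  SimpleGraph.fromRel fun a b =>
    a = none ∨ b = none ∨ ∃ i : ZMod ℓ, a = some i ∧ b = some (i + 1)

/-- The `ℓ`-fan: a path on `ℓ` vertices plus a universal vertex (`none`). -/
def fan (ℓ : ℕ) : SimpleGraph (Option (Fin ℓ)) :=
  SimpleGraph.fromRel fun a b =>
    a = none ∨ b = none ∨ ∃ i j : Fin ℓ, a = some i ∧ b = some j ∧ (j : ℕ) = (i : ℕ) + 1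

lemma setWeight_mono [Finite V] {w : V → ℝ} (hw0 : ∀ v, 0 ≤ w v) {A B : Set V} (h : A ⊆ B) :
    setWeight w A ≤ setWeight w B := by
  classical
  apply Finset.sum_le_sum_of_subset_of_nonneg
  · intro x hx
    simp only [Set.Finite.mem_toFinset] at *
    exact h hx
  · intro i _ _; exact hw0 i

lemma setWeight_add_compl [Finite V] (w : V → ℝ) (A : Set V) :
    setWeight w A + setWeight w Aᶜ = setWeight w (Set.univ : Set V) := by
  classical
  unfold setWeight
  rw [← Finset.sum_union]
  · apply Finset.sum_congr _ (fun _ _ => rfl)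
    ext x; simp [Set.Finite.mem_toFinset]; tauto
  · simp [Finset.disjoint_left, Set.Finite.mem_toFinset]

/-- thinning out balanced separators. -/
theorem modify_balanced_sep [Finite V] (G : SimpleGraph V) (w : V → ℝ)
    (hw0 : ∀ v, 0 ≤ w v) (hw1 : setWeight w (Set.univ : Set V) = 1)
    (X Y Z : Set V) (hZX : Z ⊆ X)
    (hXY : IsBalancedSep G w (X ∪ Y)) (hZ : ¬ IsBalancedSep G w Z)
    (b : V) (hb : b ∉ Z)
    (hheavy : 1 / 2 < setWeight w {u | ReachOutside G Z u b}) :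
    IsBalancedSep G w
      ((closedNbhd G {u | ReachOutside G Z u b} ∩ X) ∪ Y) := by
  classical
  set B : Set V := {u | ReachOutside G Z u b} with hBdef
  set S : Set V := (closedNbhd G B ∩ X) ∪ Y with hSdef
  -- key: a walk avoiding S that starts in B stays in B
  have key : ∀ {a c : V} (p : G.Walk a c), a ∈ B → (∀ x ∈ p.support, x ∉ S) →
      ∀ x ∈ p.support, x ∈ B := by
    intro a c p
    induction p with
    | nil =>
      intro ha h x hx
      simp only [SimpleGraph.Walk.support_nil, List.mem_singleton] at hx
      subst hx; exact ha
    | @cons u v c hadj q ih =>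
      intro ha h x hx
      have hvS : v ∉ S := h v (by simp)
      have hvB : v ∈ B := by
        by_cases hvZ : v ∈ Z
        · exfalso
          apply hvS
          exact Or.inl ⟨Or.inr ⟨u, ha, hadj⟩, hZX hvZ⟩
        · obtain ⟨pu, hpu⟩ := ha
          exact ⟨SimpleGraph.Walk.cons hadj.symm pu, by
            intro x hx
            rcases List.mem_cons.1 (SimpleGraph.Walk.support_cons _ _ ▸ hx) with h1 | h2
            · subst h1; exact hvZ
            · exact hpu x h2⟩
      rcases List.mem_cons.1 (SimpleGraph.Walk.support_cons _ _ ▸ hx) with h1 | h2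
      · subst h1; exact ha
      · exact ih hvB (fun y hy => h y (by simp [hy])) x h2
  intro v hvS
  by_cases hcase : ∃ c, ReachOutside G S c v ∧ c ∈ B
  · -- component of v lies in B, hence avoids X ∪ Y entirely
    obtain ⟨c, ⟨p, hp⟩, hcB⟩ := hcase
    have hvB : v ∈ B := key p hcB hp v p.end_mem_support
    have hvXY : v ∉ X ∪ Y := by
      rintro (hX | hY)
      · exact hvS (Or.inl ⟨Or.inl hvB, hX⟩)
      · exact hvS (Or.inr hY)
    have hsub : {u | ReachOutside G S u v} ⊆ {u | ReachOutside G (X ∪ Y) u v} := by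
      rintro u ⟨q, hq⟩
      have hsupB : ∀ x ∈ q.reverse.support, x ∈ B :=
        key q.reverse hvB (by
          intro x hx
          rw [SimpleGraph.Walk.support_reverse, List.mem_reverse] at hx
          exact hq x hx)
      refine ⟨q, fun x hx => ?_⟩
      have hxB : x ∈ B := hsupB x (by
        rw [SimpleGraph.Walk.support_reverse, List.mem_reverse]; exact hx)
      rintro (hX | hY)
      · exact hq x hx (Or.inl ⟨Or.inl hxB, hX⟩)
      · exact hq x hx (Or.inr hY)
    exact le_trans (setWeight_mono hw0 hsub) (hXY v hvXY)
  · -- component of v avoids B, whose weight exceeds 1/2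
    push_neg at hcase
    have hsub : {u | ReachOutside G S u v} ⊆ Bᶜ := fun u hu => hcase u hu
    have h1 : setWeight w Bᶜ = 1 - setWeight w B := by
      have := setWeight_add_compl w B
      rw [hw1] at this; linarith
    have h2 : setWeight w {u | ReachOutside G S u v} ≤ 1 - setWeight w B :=
      h1 ▸ setWeight_mono hw0 hsub
    rw [hw1]
    linarith
end

section
/- Let ℓ ≥ 3 be an integer, G a finite graph, and C an induced cycle in G. If some connected component of G - V(C) has at least ℓ neighbours on C, then G contains the ℓ-wheel W_ℓ as an induced minor. -/
open SimpleGraph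

variable {V : Type}

lemma cycle_param [Finite V] (G : SimpleGraph V) (C : Set V) (hC : IsInducedCycle G C) :
    ∃ (p : ℕ) (f : ℕ → V), 3 ≤ p ∧
      (∀ n, f (n + p) = f n) ∧
      (∀ n, f n ∈ C) ∧
      (∀ n, G.Adj (f n) (f (n + 1))) ∧
      (∀ m n, m < p → n < p → f m = f n → m = n) ∧
      (f '' Set.Iio p = C) ∧
      (∀ m n, m < p → n < p → G.Adj (f m) (f n) → n = (m + 1) % p ∨ m = (n + 1) % p) := by
  classical
  obtain ⟨hconn, hdeg⟩ := hC
  have two_nbrs : ∀ b ∈ C, ∀ a c, G.Adj b a → a ∈ C → G.Adj b c → c ∈ C → a ≠ c →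
      G.neighborSet b ∩ C = {a, c} := by
    intro b hb a c hba ha hbc hc hac
    refine (Set.eq_of_subset_of_ncard_le ?_ ?_ (Set.toFinite _)).symm
    · intro x hx
      rcases hx with h | h <;> simp_all [SimpleGraph.mem_neighborSet]
    · rw [hdeg b hb, Set.ncard_pair hac]
  obtain ⟨⟨x0, hx0⟩⟩ := hconn.nonempty
  obtain ⟨x1, z, hyz, hset⟩ := Set.ncard_eq_two.mp (hdeg x0 hx0)
  have hx1 : x1 ∈ G.neighborSet x0 ∩ C := by rw [hset]; left; rfl
  set next : V → V → V := fun a b =>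
    if h : ((G.neighborSet b ∩ C) \ {a}).Nonempty then h.choose else b with hnextdef
  have next_spec : ∀ a b, b ∈ C → G.Adj b a → a ∈ C →
      next a b ∈ G.neighborSet b ∩ C ∧ next a b ≠ a := by
    intro a b hb hba ha
    obtain ⟨y', z', hyz', hset'⟩ := Set.ncard_eq_two.mp (hdeg b hb)
    have hne : ((G.neighborSet b ∩ C) \ {a}).Nonempty := by
      rw [hset']
      by_cases hy : y' = a
      · exact ⟨z', by simp [hy ▸ hyz'.symm]⟩
      · exact ⟨y', by simp [hy]⟩
    have h1 := hne.choose_spec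
    rw [hnextdef]
    simp only [dif_pos hne]
    exact ⟨h1.1, by simpa using h1.2⟩
  have back_inj : ∀ a a' b, b ∈ C → G.Adj b a → a ∈ C → G.Adj b a' → a' ∈ C →
      next a b = next a' b → a = a' := by
    intro a a' b hb hba ha hba' ha' hne
    obtain ⟨hn1, hn2⟩ := next_spec a b hb hba ha
    have h2 := two_nbrs b hb a (next a b) hba ha hn1.1 hn1.2 (Ne.symm hn2)
    obtain ⟨hn1', hn2'⟩ := next_spec a' b hb hba' ha'
    have ha'mem : a' ∈ G.neighborSet b ∩ C := ⟨hba', ha'⟩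
    rw [h2] at ha'mem
    rcases ha'mem with h | h
    · exact h.symm
    · exfalso; exact hn2' (by rw [← hne, ← h])
  set step : V × V → V × V := fun q => (q.2, next q.1 q.2) with hstepdef
  set g : ℕ → V × V := fun n => step^[n] (x0, x1) with hgdef
  have hgsucc : ∀ n, g (n + 1) = step (g n) := by
    intro n
    show step^[n + 1] (x0, x1) = step (step^[n] (x0, x1))
    rw [Function.iterate_succ_apply']
  set f : ℕ → V := fun n => (g n).1 with hfdef
  have hf1 : ∀ n, f (n + 1) = (g n).2 := by
    intro n
    show (g (n + 1)).1 = (g n).2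
    rw [hgsucc n]
  have inv : ∀ n, (g n).1 ∈ C ∧ (g n).2 ∈ C ∧ G.Adj (g n).1 (g n).2 := by
    intro n
    induction n with
    | zero => exact ⟨hx0, hx1.2, hx1.1⟩
    | succ n ih =>
      obtain ⟨h1, h2, h3⟩ := ih
      rw [hgsucc n]
      have := next_spec (g n).1 (g n).2 h2 h3.symm h1
      exact ⟨h2, this.1.2, this.1.1⟩
  have hfC : ∀ n, f n ∈ C := fun n => (inv n).1
  have hfAdj : ∀ n, G.Adj (f n) (f (n + 1)) := by
    intro n; rw [hf1 n]; exact (inv n).2.2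
  have hgpair : ∀ n, g n = (f n, f (n + 1)) := by
    intro n; rw [hf1 n]
  have hfnext : ∀ n, f (n + 2) = next (f n) (f (n + 1)) := by
    intro n
    have h := hf1 (n + 1)
    rw [hgsucc n, hgpair n] at h
    exact h
  have hfne2 : ∀ n, f (n + 2) ≠ f n := by
    intro n
    rw [hfnext n]
    exact (next_spec (f n) (f (n + 1)) (hfC (n + 1)) (hfAdj n).symm (hfC n)).2
  have step_inj : ∀ m n, step (g m) = step (g n) → g m = g n := by
    intro m n h
    obtain ⟨hm1, hm2, hm3⟩ := inv m
    obtain ⟨hn1, hn2, hn3⟩ := inv n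
    have h2 : (g m).2 = (g n).2 := congrArg Prod.fst h
    have h3 : next (g m).1 (g m).2 = next (g n).1 (g n).2 := congrArg Prod.snd h
    rw [h2] at h3 hm3
    have h1 := back_inj (g m).1 (g n).1 (g n).2 hn2 hm3.symm hm1 hn3.symm hn1 h3
    exact Prod.ext h1 h2
  have hex : ∃ n, ∃ m, m < n ∧ g m = g n := by
    obtain ⟨m, n, hmn, h⟩ := Finite.exists_ne_map_eq_of_infinite g
    rcases lt_or_gt_of_ne hmn with h' | h'
    · exact ⟨n, m, h', h⟩
    · exact ⟨m, n, h', h.symm⟩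
  obtain ⟨p, hgm0, hginj, hppos⟩ :
      ∃ p, g p = g 0 ∧ (∀ m n, m < p → n < p → g m = g n → m = n) ∧ 0 < p := by
    refine ⟨Nat.find hex, ?_, ?_, ?_⟩
    · obtain ⟨m0, hm0, hgm0⟩ := Nat.find_spec hex
      have hm00 : m0 = 0 := by
        by_contra h0
        have hp1 : 1 ≤ m0 := Nat.one_le_iff_ne_zero.mpr h0
        have hple : 1 ≤ Nat.find hex := le_trans hp1 (le_of_lt hm0)
        have h1 : g (m0 - 1 + 1) = g (Nat.find hex - 1 + 1) := by
          rw [Nat.sub_add_cancel hp1, Nat.sub_add_cancel hple]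
          exact hgm0
        rw [hgsucc, hgsucc] at h1
        have h2 := step_inj _ _ h1
        exact Nat.find_min hex (Nat.sub_lt (lt_of_le_of_lt (Nat.zero_le m0) hm0) one_pos)
          ⟨m0 - 1, by omega, h2⟩
      rw [hm00] at hgm0
      exact hgm0.symm
    · intro m n hm hn h
      by_contra hne
      rcases lt_or_gt_of_ne hne with h' | h'
      · exact Nat.find_min hex hn ⟨m, h', h⟩
      · exact Nat.find_min hex hm ⟨n, h', h.symm⟩
    · obtain ⟨m0, hm0, _⟩ := Nat.find_spec hex
      exact lt_of_le_of_lt (Nat.zero_le m0) hm0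
  have hgper : ∀ n, g (n + p) = g n := by
    intro n
    induction n with
    | zero => simpa using hgm0
    | succ n ih =>
      have h : n + 1 + p = (n + p) + 1 := by omega
      rw [h, hgsucc, ih, ← hgsucc]
  have hfper : ∀ n, f (n + p) = f n := by
    intro n
    show (g (n + p)).1 = (g n).1
    rw [hgper n]
  have hp3 : 3 ≤ p := by
    have h1 : p ≠ 1 := by
      intro h
      have := hfper 0
      rw [h] at this
      simp only [Nat.zero_add] at this
      exact (hfAdj 0).ne' this
    have h2 : p ≠ 2 := by
      intro h
      have := hfper 0
      rw [h] at this
      simp only [Nat.zero_add] at this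
      exact hfne2 0 this
    omega
  have hfmod : ∀ n, f n = f (n % p) := by
    intro n
    conv_lhs => rw [← Nat.div_add_mod n p]
    generalize n / p = q
    induction q with
    | zero => simp
    | succ q ih =>
      have h : p * (q + 1) + n % p = (p * q + n % p) + p := by ring
      rw [h, hfper, ih]
  have claim : ∀ k m n, m < n → n < p → f m = f n → 2 * k ≤ n - m → f (m + k) = f (n - k) := by
    intro k
    induction k with
    | zero => intro m n _ _ h _; simpa using h
    | succ k ih =>
      intro m n hmn hnp hfe h2k
      have hk := ih m n hmn hnp hfe (by omega)
      set a := m + k with hadef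
      set b := n - k with hbdef
      have hab : a + 1 < b := by omega
      have hb1 : 1 ≤ b := by omega
      have hbp : b < p := by omega
      have hbprev : G.Adj (f b) (f (b - 1)) := by
        have h := hfAdj (b - 1)
        rw [Nat.sub_add_cancel hb1] at h
        exact h.symm
      have hbne : f (b - 1) ≠ f (b + 1) := by
        have h := hfne2 (b - 1)
        have h2 : b - 1 + 2 = b + 1 := by omega
        rw [h2] at h
        exact fun hh => h hh.symm
      have hNb : G.neighborSet (f b) ∩ C = {f (b - 1), f (b + 1)} :=
        two_nbrs (f b) (hfC b) (f (b - 1)) (f (b + 1)) hbprev (hfC (b - 1)) (hfAdj b)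
          (hfC (b + 1)) hbne
      have hmem : f (a + 1) ∈ G.neighborSet (f b) ∩ C := by
        rw [← hk]
        exact ⟨hfAdj a, hfC (a + 1)⟩
      rw [hNb] at hmem
      rcases hmem with h | h
      · have he : n - (k + 1) = b - 1 := by omega
        have he2 : m + (k + 1) = a + 1 := by omega
        rw [he, he2]
        exact h
      · exfalso
        have hgab : g a = g b := by
          rw [hgpair, hgpair]
          exact Prod.ext hk (by simpa using h)
        have := hginj a b (by omega) hbp hgab
        omega
  have hfinj : ∀ m n, m < p → n < p → f m = f n → m = n := by
    intro m n hm hn hfe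
    by_contra hne
    rcases Ne.lt_or_gt hne with hmn | hmn
    rotate_left
    · exact absurd (hfe.symm) (by
        intro hfe'
        rcases Nat.even_or_odd (m - n) with ⟨k, hk⟩ | ⟨k, hk⟩
        · have hk1 : 1 ≤ k := by omega
          have h := claim (k - 1) n m hmn hm hfe' (by omega)
          have h1 : n + (k - 1) + 2 = m - (k - 1) := by omega
          exact hfne2 (n + (k - 1)) (by rw [h1]; exact h.symm)
        · have h := claim k n m hmn hm hfe' (by omega)
          have h1 : m - k = n + k + 1 := by omega
          rw [h1] at h
          exact (hfAdj (n + k)).ne h)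
    · rcases Nat.even_or_odd (n - m) with ⟨k, hk⟩ | ⟨k, hk⟩
      · have hk1 : 1 ≤ k := by omega
        have h := claim (k - 1) m n hmn hn hfe (by omega)
        have h1 : m + (k - 1) + 2 = n - (k - 1) := by omega
        exact hfne2 (m + (k - 1)) (by rw [h1]; exact h.symm)
      · have h := claim k m n hmn hn hfe (by omega)
        have h1 : n - k = m + k + 1 := by omega
        rw [h1] at h
        exact (hfAdj (m + k)).ne h
  have hNall : ∀ n, G.neighborSet (f n) ∩ C = {f (n + 1), f (n + p - 1)} := by
    intro n
    have hkey : G.Adj (f n) (f (n + p - 1)) := by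
      have h := hfAdj (n + p - 1)
      have h1 : n + p - 1 + 1 = n + p := by omega
      rw [h1, hfper] at h
      exact h.symm
    have hne : f (n + 1) ≠ f (n + p - 1) := by
      rw [hfmod (n + 1), hfmod (n + p - 1)]
      intro h
      have h2 := hfinj _ _ (Nat.mod_lt _ hppos) (Nat.mod_lt _ hppos) h
      have h3 : (n + p - 1) = (n + 1) + (p - 2) := by omega
      rw [h3] at h2
      have h4 : ((n + 1) + (p - 2)) % p = ((n + 1) + 0) % p := by
        rw [← h2]
      have h5 : (p - 2) ≡ 0 [MOD p] :=
        Nat.ModEq.add_left_cancel' (n + 1) h4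
      have h6 : (p - 2) % p = 0 := by simpa [Nat.ModEq] using h5
      rw [Nat.mod_eq_of_lt (by omega)] at h6
      omega
    exact two_nbrs (f n) (hfC n) (f (n + 1)) (f (n + p - 1)) (hfAdj n) (hfC (n + 1)) hkey
      (hfC (n + p - 1)) hne
  have hsub : f '' Set.Iio p ⊆ C := by
    rintro x ⟨n, _, rfl⟩; exact hfC n
  have hclosed : ∀ y ∈ f '' Set.Iio p, ∀ z, G.Adj y z → z ∈ C → z ∈ f '' Set.Iio p := by
    rintro y ⟨n, hn, rfl⟩ z hadj hz
    have h : z ∈ G.neighborSet (f n) ∩ C := ⟨hadj, hz⟩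
    rw [hNall n] at h
    rcases h with h | h
    · exact ⟨(n + 1) % p, Nat.mod_lt _ hppos, by rw [← hfmod]; exact h.symm⟩
    · exact ⟨(n + p - 1) % p, Nat.mod_lt _ hppos, by rw [← hfmod]; exact h.symm⟩
  have hsurj : f '' Set.Iio p = C := by
    apply Set.Subset.antisymm hsub
    intro y hy
    have hwalk : ∀ (a b : ↥C) (w : (G.induce C).Walk a b),
        (a : V) ∈ f '' Set.Iio p → (b : V) ∈ f '' Set.Iio p := by
      intro a b w
      induction w with
      | nil => exact id
      | @cons u v' w' hadj q ih =>
        intro ha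
        apply ih
        have hadj' : G.Adj (u : V) (v' : V) := hadj
        exact hclosed _ ha _ hadj' v'.2
    obtain ⟨w⟩ := hconn ⟨x0, hx0⟩ ⟨y, hy⟩
    exact hwalk _ _ w ⟨0, hppos, rfl⟩
  have hadjchar : ∀ m n, m < p → n < p → G.Adj (f m) (f n) →
      n = (m + 1) % p ∨ m = (n + 1) % p := by
    intro m n hm hn hadj
    have h : f n ∈ G.neighborSet (f m) ∩ C := ⟨hadj, hfC n⟩
    rw [hNall m] at h
    rcases h with h | h
    · left
      have h1 : f n = f ((m + 1) % p) := by rw [← hfmod]; exact h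
      exact hfinj n _ hn (Nat.mod_lt _ hppos) h1
    · right
      have h1 : f n = f ((m + p - 1) % p) := by rw [← hfmod]; exact h
      have h2 : n = (m + p - 1) % p := hfinj n _ hn (Nat.mod_lt _ hppos) h1
      rw [h2, Nat.mod_add_mod]
      have h3 : m + p - 1 + 1 = m + p := by omega
      rw [h3, Nat.add_mod_right, Nat.mod_eq_of_lt hm]
  exact ⟨p, f, hp3, hfper, hfC, hfAdj, hfinj, hsurj, hadjchar⟩

lemma chain_conn (G : SimpleGraph V) (f : ℕ → V)
    (hAdj : ∀ n, G.Adj (f n) (f (n + 1))) (a b : ℕ) (hab : a < b) :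
    (G.induce (f '' Set.Ico a b)).Connected := by
  rw [SimpleGraph.connected_iff]
  have hmem : f a ∈ f '' Set.Ico a b := ⟨a, ⟨le_refl a, hab⟩, rfl⟩
  refine ⟨?_, ⟨⟨f a, hmem⟩⟩⟩
  have key : ∀ n, a ≤ n → n < b → ∀ (h : f n ∈ f '' Set.Ico a b),
      (G.induce (f '' Set.Ico a b)).Reachable ⟨f a, hmem⟩ ⟨f n, h⟩ := by
    intro n hn
    induction n, hn using Nat.le_induction with
    | base =>
      intro _ h
      have he : (⟨f a, hmem⟩ : ↥(f '' Set.Ico a b)) = ⟨f a, h⟩ := Subtype.ext rfl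
      rw [← he]
    | succ n hn ih =>
      intro hn2 h
      have h1 : n < b := by omega
      refine (ih h1 ⟨n, ⟨hn, h1⟩, rfl⟩).trans ?_
      have hadj : (G.induce (f '' Set.Ico a b)).Adj ⟨f n, ⟨n, ⟨hn, h1⟩, rfl⟩⟩ ⟨f (n + 1), h⟩ :=
        hAdj n
      exact hadj.reachable
  rintro ⟨x, hx⟩ ⟨y, hy⟩
  obtain ⟨n, hn, rfl⟩ := id hx
  obtain ⟨m, hm, rfl⟩ := id hy
  exact (key n hn.1 hn.2 _).symm.trans (key m hm.1 hm.2 _)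

lemma comp_conn (G : SimpleGraph V) (C : Set V) (d : V) (hd : d ∉ C) :
    (G.induce {u | ReachOutside G C u d}).Connected := by
  set D := {u | ReachOutside G C u d} with hDdef
  have hdD : d ∈ D := ⟨Walk.nil, by simpa using hd⟩
  rw [SimpleGraph.connected_iff]
  refine ⟨?_, ⟨⟨d, hdD⟩⟩⟩
  have key : ∀ u v (w : G.Walk u v), (∀ x ∈ w.support, x ∉ C) →
      ∀ (hu : u ∈ D) (hv : v ∈ D), (G.induce D).Reachable ⟨u, hu⟩ ⟨v, hv⟩ := by
    intro u v w
    induction w with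
    | nil =>
      intro _ hu hv
      have he : (⟨_, hu⟩ : ↥D) = ⟨_, hv⟩ := Subtype.ext rfl
      rw [he]
    | @cons u v' v hadj q ih =>
      intro hsup hu hv
      have hv' : v' ∈ D := by
        obtain ⟨wv, hwv⟩ := hv
        refine ⟨q.append wv, ?_⟩
        intro x hx
        rw [Walk.mem_support_append_iff] at hx
        rcases hx with hx | hx
        · exact hsup x (by simp [hx])
        · exact hwv x hx
      have hadj' : (G.induce D).Adj ⟨u, hu⟩ ⟨v', hv'⟩ := hadj
      exact hadj'.reachable.trans (ih (fun x hx => hsup x (by simp [hx])) hv' hv)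
  rintro ⟨x, hx⟩ ⟨y, hy⟩
  obtain ⟨wx, hwx⟩ := id hx
  exact key x d wx hwx hx hdD |>.trans (by
    obtain ⟨wy, hwy⟩ := id hy
    exact (key y d wy hwy hy hdD).symm)

lemma win_eq_aux {p x y w : ℕ} (hx1 : w ≤ x) (hx2 : x < w + p) (hy1 : w ≤ y)
    (hy2 : y < w + p) (h : x % p = y % p) : x = y := by
  rcases le_total x y with hle | hle
  · obtain ⟨c, hc⟩ := (Nat.modEq_iff_dvd' hle).mp h
    have hc0 : c = 0 := by
      by_contra h0
      have := Nat.le_mul_of_pos_right p (Nat.pos_of_ne_zero h0)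
      omega
    rw [hc0, Nat.mul_zero] at hc
    omega
  · obtain ⟨c, hc⟩ := (Nat.modEq_iff_dvd' hle).mp h.symm
    have hc0 : c = 0 := by
      by_contra h0
      have := Nat.le_mul_of_pos_right p (Nat.pos_of_ne_zero h0)
      omega
    rw [hc0, Nat.mul_zero] at hc
    omega

/-- if a component of `G - V(C)` has at least `ℓ` neighbours on the
induced cycle `C`, then `G` contains the `ℓ`-wheel as an induced minor. -/
theorem wheel_from_large_neighbourhood [Finite V] (G : SimpleGraph V)
    (ℓ : ℕ) (hℓ : 3 ≤ ℓ) (C : Set V) (hC : IsInducedCycle G C)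
    (d : V) (hd : d ∉ C)
    (hnb : ℓ ≤ ({x | x ∈ C ∧ ∃ u, ReachOutside G C u d ∧ G.Adj u x}).ncard) :
    IsInducedMinor (wheel ℓ) G := by
  classical
  haveI : NeZero ℓ := ⟨by omega⟩
  haveI : Fact (1 < ℓ) := ⟨by omega⟩
  have hℓpos : 0 < ℓ := by omega
  obtain ⟨p, f, hp3, hfper, hfC, hfAdj, hfinj, hfsurj, hadjchar⟩ := cycle_param G C hC
  have hppos : 0 < p := by omega
  have hfmod : ∀ n, f n = f (n % p) := by
    intro n
    conv_lhs => rw [← Nat.div_add_mod n p]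
    generalize n / p = q
    induction q with
    | zero => simp
    | succ q ih =>
      have h : p * (q + 1) + n % p = (p * q + n % p) + p := by ring
      rw [h, hfper, ih]
  set D := {u | ReachOutside G C u d} with hDdef
  have hDC : ∀ u ∈ D, u ∉ C := by
    rintro u ⟨w, hw⟩
    exact hw u w.start_mem_support
  set S := {x | x ∈ C ∧ ∃ u, ReachOutside G C u d ∧ G.Adj u x} with hSdef
  set T : Finset ℕ := (Finset.range p).filter (fun n => f n ∈ S) with hTdef
  have hTS : ∀ n ∈ T, f n ∈ S ∧ n < p := by
    intro n hn
    rw [hTdef, Finset.mem_filter, Finset.mem_range] at hn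
    exact ⟨hn.2, hn.1⟩
  have hcard : ℓ ≤ T.card := by
    have hsub : S ⊆ f '' (T : Set ℕ) := by
      intro x hx
      have hxC : x ∈ C := hx.1
      rw [← hfsurj] at hxC
      obtain ⟨n, hn, rfl⟩ := hxC
      refine ⟨n, ?_, rfl⟩
      rw [Finset.mem_coe, hTdef, Finset.mem_filter, Finset.mem_range]
      exact ⟨hn, hx⟩
    calc ℓ ≤ S.ncard := hnb
      _ ≤ (f '' (T : Set ℕ)).ncard := Set.ncard_le_ncard hsub (Set.toFinite _)
      _ ≤ (T : Set ℕ).ncard := Set.ncard_image_le (Set.toFinite _)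
      _ = T.card := Set.ncard_coe_finset T
  obtain ⟨T', hT'sub, hT'card⟩ := Finset.exists_subset_card_eq hcard
  set t : Fin ℓ ↪o ℕ := T'.orderEmbOfFin hT'card with htdef
  have ht_mem : ∀ i, t i ∈ T := fun i => hT'sub (Finset.orderEmbOfFin_mem T' hT'card i)
  have ht_lt : ∀ i, t i < p := fun i => (hTS _ (ht_mem i)).2
  have ht_S : ∀ i, f (t i) ∈ S := fun i => (hTS _ (ht_mem i)).1
  set uu : ℕ → ℕ := fun j => if h : j < ℓ then t ⟨j, h⟩ else t ⟨0, hℓpos⟩ + p with huudef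
  have uu_val : ∀ j (h : j < ℓ), uu j = t ⟨j, h⟩ := by
    intro j h; rw [huudef]; simp [dif_pos h]
  have uu_top : uu ℓ = uu 0 + p := by
    rw [huudef]; simp [lt_irrefl, hℓpos]
  have uu_lt_mono : ∀ j k, j < k → k ≤ ℓ → uu j < uu k := by
    intro j k hjk hk
    by_cases hkℓ : k < ℓ
    · have hj : j < ℓ := by omega
      rw [uu_val j hj, uu_val k hkℓ]
      exact t.strictMono (show (⟨j, hj⟩ : Fin ℓ) < ⟨k, hkℓ⟩ from hjk)
    · have hkeq : k = ℓ := by omega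
      have hj : j < ℓ := by omega
      rw [hkeq, uu_top, uu_val j hj]
      have := ht_lt ⟨j, hj⟩
      omega
  have uu_le : ∀ j k, j ≤ k → k ≤ ℓ → uu j ≤ uu k := by
    intro j k hjk hk
    rcases eq_or_lt_of_le hjk with h | h
    · exact le_of_eq (congrArg uu h)
    · exact le_of_lt (uu_lt_mono j k h hk)
  have hbound : ∀ j, j < ℓ → ∀ n, uu j ≤ n → n < uu (j + 1) → uu 0 ≤ n ∧ n < uu 0 + p := by
    intro j hj n h1 h2
    constructor
    · exact le_trans (uu_le 0 j (Nat.zero_le j) (le_of_lt hj)) h1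
    · rw [← uu_top]
      exact lt_of_lt_of_le h2 (uu_le (j + 1) ℓ hj le_rfl)
  -- injectivity of f on the window
  have fwin_inj : ∀ x y, uu 0 ≤ x → x < uu 0 + p → uu 0 ≤ y → y < uu 0 + p →
      f x = f y → x = y := by
    intro x y hx1 hx2 hy1 hy2 hfe
    have h1 : f (x % p) = f (y % p) := by rw [← hfmod, ← hfmod]; exact hfe
    have h2 := hfinj _ _ (Nat.mod_lt _ hppos) (Nat.mod_lt _ hppos) h1
    exact win_eq_aux hx1 hx2 hy1 hy2 h2
  -- the arcs
  set A : ℕ → Set V := fun j => f '' Set.Ico (uu j) (uu (j + 1)) with hAdef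
  have hAC : ∀ j, ∀ x ∈ A j, x ∈ C := by
    rintro j x ⟨n, _, rfl⟩; exact hfC n
  -- interval uniqueness
  have interval_uniq : ∀ j k n, j < ℓ → k < ℓ → uu j ≤ n → n < uu (j + 1) →
      uu k ≤ n → n < uu (k + 1) → j = k := by
    intro j k n hj hk h1 h2 h3 h4
    by_contra hne
    rcases Nat.lt_or_ge j k with h | h
    · have := uu_le (j + 1) k h (le_of_lt hk)
      omega
    · have hlt : k < j := by omega
      have := uu_le (k + 1) j hlt (le_of_lt hj)
      omega
  -- the key consecutivity analysis
  have key : ∀ j k n m, j < ℓ → k < ℓ → j ≠ k →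
      uu j ≤ n → n < uu (j + 1) → uu k ≤ m → m < uu (k + 1) →
      m % p = (n + 1) % p → (k = j + 1 ∨ (j = ℓ - 1 ∧ k = 0)) := by
    intro j k n m hj hk hjk h1 h2 h3 h4 hmod
    obtain ⟨hn1, hn2⟩ := hbound j hj n h1 h2
    obtain ⟨hm1, hm2⟩ := hbound k hk m h3 h4
    by_cases hcase : n + 1 < uu 0 + p
    · -- m = n + 1
      have hm : m = n + 1 := win_eq_aux hm1 hm2 (by omega) hcase hmod
      left
      -- now interval argument
      rcases Nat.lt_or_ge j k with h | h
      · -- j < k : k = j + 1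
        by_contra hne
        have hk2 : j + 1 < k := by omega
        have hA := uu_le (j + 1) k (by omega) (le_of_lt hk)
        have hB := uu_lt_mono (j + 1) k hk2 (le_of_lt hk)
        omega
      · exfalso
        have hlt : k < j := by omega
        have := uu_le (k + 1) j hlt (le_of_lt hj)
        omega
    · -- wrap-around: n = uu 0 + p - 1, m = uu 0
      have hn : n = uu 0 + p - 1 := by omega
      have hmod2 : m % p = uu 0 % p := by
        rw [hmod]
        have : n + 1 = uu 0 + p := by omega
        rw [this, Nat.add_mod_right]
      have hm : m = uu 0 := win_eq_aux hm1 hm2 le_rfl (by omega) hmod2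
      right
      constructor
      · -- j = ℓ - 1
        by_contra hne
        have hj2 : j + 1 ≤ ℓ - 1 := by omega
        have hA := uu_le (j + 1) (ℓ - 1) hj2 (by omega)
        have hB := uu_lt_mono (ℓ - 1) ℓ (by omega) le_rfl
        rw [uu_top] at hB
        omega
      · -- k = 0
        by_contra hne
        have := uu_lt_mono 0 k (by omega) (le_of_lt hk)
        omega
  -- val of successor in ZMod ℓ
  have hval1 : ∀ x : ZMod ℓ, (x + 1).val = (x.val + 1) % ℓ := by
    intro x
    rw [ZMod.val_add, ZMod.val_one]
  -- existence of edges between consecutive arcs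
  have haveEdge : ∀ x y : ZMod ℓ, y = x + 1 →
      ∃ u ∈ A x.val, ∃ v ∈ A y.val, G.Adj u v := by
    intro x y hxy
    set j := x.val with hjdef
    have hj : j < ℓ := ZMod.val_lt x
    have hyval : y.val = (j + 1) % ℓ := by rw [hxy, hval1]
    have hlt : uu j < uu (j + 1) := uu_lt_mono j (j + 1) (by omega) hj
    by_cases hc : j + 1 < ℓ
    · have hk : y.val = j + 1 := by rw [hyval, Nat.mod_eq_of_lt hc]
      refine ⟨f (uu (j + 1) - 1), ⟨uu (j + 1) - 1, ⟨by omega, by omega⟩, rfl⟩,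
        f (uu (j + 1)), ⟨uu (j + 1), ?_, rfl⟩, ?_⟩
      · rw [hk]
        exact ⟨le_rfl, uu_lt_mono (j + 1) (j + 2) (by omega) (by omega)⟩
      · have h := hfAdj (uu (j + 1) - 1)
        have he : uu (j + 1) - 1 + 1 = uu (j + 1) := by omega
        rw [he] at h
        exact h
    · have hjtop : j + 1 = ℓ := by omega
      have hk : y.val = 0 := by rw [hyval, hjtop, Nat.mod_self]
      have htop : uu (j + 1) = uu 0 + p := by rw [hjtop, uu_top]
      refine ⟨f (uu (j + 1) - 1), ⟨uu (j + 1) - 1, ⟨by omega, by omega⟩, rfl⟩,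
        f (uu 0), ⟨uu 0, ?_, rfl⟩, ?_⟩
      · rw [hk]
        exact ⟨le_rfl, uu_lt_mono 0 1 one_pos (by omega)⟩
      · have h := hfAdj (uu (j + 1) - 1)
        have he : uu (j + 1) - 1 + 1 = uu (j + 1) := by omega
        rw [he] at h
        have h2 : f (uu (j + 1)) = f (uu 0) := by rw [htop, hfper]
        rw [h2] at h
        exact h
  -- the branch sets
  set X : Option (ZMod ℓ) → Set V := fun o => o.elim D (fun i => A i.val) with hXdef
  refine ⟨X, ?_, ?_, ?_⟩
  · -- connectivity
    rintro (_ | i)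
    · exact comp_conn G C d hd
    · exact chain_conn G f hfAdj (uu i.val) (uu (i.val + 1))
        (uu_lt_mono i.val (i.val + 1) (by omega) (ZMod.val_lt i))
  · -- disjointness
    have hDA : ∀ i : ZMod ℓ, Disjoint D (A i.val) := by
      intro i
      rw [Set.disjoint_left]
      intro x hx hx'
      exact hDC x hx (hAC _ _ hx')
    have hAA : ∀ i i' : ZMod ℓ, i ≠ i' → Disjoint (A i.val) (A i'.val) := by
      intro i i' hne
      rw [Set.disjoint_left]
      rintro x ⟨n, ⟨h1, h2⟩, rfl⟩ ⟨m, ⟨h3, h4⟩, hfm⟩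
      have hi : i.val < ℓ := ZMod.val_lt i
      have hi' : i'.val < ℓ := ZMod.val_lt i'
      obtain ⟨hn1, hn2⟩ := hbound i.val hi n h1 h2
      obtain ⟨hm1, hm2⟩ := hbound i'.val hi' m h3 h4
      have heq : m = n := fwin_inj m n hm1 hm2 hn1 hn2 hfm
      subst heq
      exact hne (ZMod.val_injective ℓ (interval_uniq i.val i'.val m hi hi' h1 h2 h3 h4))
    rintro (_ | i) (_ | i') hne
    · exact absurd rfl hne
    · exact hDA i'
    · exact (hDA i).symm
    · exact hAA i i' (fun h => hne (by rw [h]))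
  · -- adjacency
    have hwheel_some : ∀ i i' : ZMod ℓ, i ≠ i' →
        ((wheel ℓ).Adj (some i) (some i') ↔ (i' = i + 1 ∨ i = i' + 1)) := by
      intro i i' hne
      rw [wheel, SimpleGraph.fromRel_adj]
      constructor
      · rintro ⟨-, h | h⟩
        · rcases h with h | h | ⟨x, hx1, hx2⟩
          · exact absurd h (by simp)
          · exact absurd h (by simp)
          · left
            obtain rfl : i = x := Option.some_injective _ hx1
            exact Option.some_injective _ hx2
        · rcases h with h | h | ⟨x, hx1, hx2⟩
          · exact absurd h (by simp)
          · exact absurd h (by simp)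
          · right
            obtain rfl : i' = x := Option.some_injective _ hx1
            exact Option.some_injective _ hx2
      · rintro (h | h)
        · exact ⟨by simpa using hne, Or.inl (Or.inr (Or.inr ⟨i, rfl, by rw [h]⟩))⟩
        · exact ⟨by simpa using hne, Or.inr (Or.inr (Or.inr ⟨i', rfl, by rw [h]⟩))⟩
    have hhub : ∀ i : ZMod ℓ, ∃ u ∈ D, ∃ v ∈ A i.val, G.Adj u v := by
      intro i
      have hi : i.val < ℓ := ZMod.val_lt i
      have hmem : f (uu i.val) ∈ S := by
        rw [uu_val i.val hi]
        exact ht_S ⟨i.val, hi⟩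
      obtain ⟨-, u, hu, hadj⟩ := hmem
      exact ⟨u, hu, f (uu i.val),
        ⟨uu i.val, ⟨le_rfl, uu_lt_mono i.val (i.val + 1) (by omega) hi⟩, rfl⟩, hadj⟩
    have harc_edge : ∀ i i' : ZMod ℓ, i ≠ i' →
        (∃ u ∈ A i.val, ∃ v ∈ A i'.val, G.Adj u v) → (i' = i + 1 ∨ i = i' + 1) := by
      intro i i' hne
      rintro ⟨u, ⟨n, ⟨h1, h2⟩, rfl⟩, v, ⟨m, ⟨h3, h4⟩, rfl⟩, hadj⟩
      have hi : i.val < ℓ := ZMod.val_lt i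
      have hi' : i'.val < ℓ := ZMod.val_lt i'
      have hvne : i.val ≠ i'.val := fun h => hne (ZMod.val_injective ℓ h)
      have hadj2 : G.Adj (f (n % p)) (f (m % p)) := by
        rw [← hfmod, ← hfmod]; exact hadj
      have h5 := hadjchar _ _ (Nat.mod_lt _ hppos) (Nat.mod_lt _ hppos) hadj2
      rcases h5 with h5 | h5
      · -- m % p = (n+1) % p
        have hmod : m % p = (n + 1) % p := by
          rw [h5, Nat.mod_add_mod]
        have hres := key i.val i'.val n m hi hi' hvne h1 h2 h3 h4 hmod
        rcases hres with h | ⟨ha, hb⟩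
        · left
          apply ZMod.val_injective
          rw [hval1, Nat.mod_eq_of_lt (by omega), h]
        · left
          apply ZMod.val_injective
          rw [hval1, ha, hb]
          have : ℓ - 1 + 1 = ℓ := by omega
          rw [this, Nat.mod_self]
      · -- n % p = (m+1) % p
        have hmod : n % p = (m + 1) % p := by
          rw [h5, Nat.mod_add_mod]
        have hres := key i'.val i.val m n hi' hi (Ne.symm hvne) h3 h4 h1 h2 hmod
        rcases hres with h | ⟨ha, hb⟩
        · right
          apply ZMod.val_injective
          rw [hval1, Nat.mod_eq_of_lt (by omega), h]
        · right
          apply ZMod.val_injective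
          rw [hval1, ha, hb]
          have : ℓ - 1 + 1 = ℓ := by omega
          rw [this, Nat.mod_self]
    rintro (_ | i) (_ | i') hne
    · exact absurd rfl hne
    · -- none, some i'
      constructor
      · intro _
        exact ⟨by simp, Or.inl (Or.inl rfl)⟩
      · intro _
        exact hhub i'
    · -- some i, none
      constructor
      · intro _
        exact ⟨by simp, Or.inr (Or.inl rfl)⟩
      · intro _
        obtain ⟨u, hu, v, hv, hadj⟩ := hhub i
        exact ⟨v, hv, u, hu, hadj.symm⟩
    · -- some, some
      have hii' : i ≠ i' := fun h => hne (by rw [h])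
      rw [hwheel_some i i' hii']
      constructor
      · exact harc_edge i i' hii'
      · rintro (h | h)
        · exact haveEdge i i' h
        · obtain ⟨u, hu, v, hv, hadj⟩ := haveEdge i' i h
          exact ⟨v, hv, u, hu, hadj.symm⟩
end

section
/- Let G be a cobweb with presentation (C, I), let W be a wedge of (G, C, I), and let u ∈ I be a vertex that does not attach to W. Then the barrier ∂W separates u from W ∩ C in G; that is, every path in G from u to a vertex of V(W) ∩ V(C) meets ∂W. -/
open SimpleGraph

variable {V : Type}

/-- `G` is a cobweb with presentation `(C, I)`. -/
def IsCobweb (G : SimpleGraph V) (C I : Set V) : Prop :=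
  IsInducedCycle G C ∧ I = Cᶜ ∧ I.Nonempty ∧
  (∀ u ∈ I, ∀ v ∈ I, ¬ G.Adj u v) ∧
  (∀ v : V, 2 ≤ (G.neighborSet v).ncard) ∧
  ∀ u ∈ I, ∀ v ∈ I, u ≠ v → ¬ G.neighborSet u ⊆ G.neighborSet v

/-- A subgraph is a cycle: its coercion is connected and 2-regular. -/
def IsCycleSubgraph (G : SimpleGraph V) (W : G.Subgraph) : Prop :=
  W.coe.Connected ∧ ∀ x ∈ W.verts, (W.neighborSet x).ncard = 2

/-- `W` is a wedge of `(G, C, I)` anchored in `v`: a cycle containing exactly one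
vertex of `I`, namely `v`, and exactly two neighbours of `v`. -/
def IsWedge (G : SimpleGraph V) (C I : Set V) (W : G.Subgraph) (v : V) : Prop :=
  IsCycleSubgraph G W ∧ v ∈ I ∧ W.verts ∩ I = {v} ∧
  (W.verts ∩ G.neighborSet v).ncard = 2

/-- `u` attaches to the wedge `W`. -/
def Attaches (G : SimpleGraph V) (u : V) (W : G.Subgraph) : Prop :=
  u ∉ W.verts ∧ G.neighborSet u ⊆ W.verts

/-- The union of components of `G - V(W)` containing vertices of `C`
(for a non-co-trivial wedge this is the unique such component). -/
def outerPart (G : SimpleGraph V) (C : Set V) (W : G.Subgraph) : Set V :=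
  {d | d ∉ W.verts ∧ ∃ c ∈ C, c ∉ W.verts ∧ ReachOutside G W.verts d c}

open Classical in
/-- The barrier `∂W` of a wedge `W` anchored in `v`. -/
noncomputable def barrier (G : SimpleGraph V) (C : Set V) (W : G.Subgraph) (v : V) : Set V :=
  if C ⊆ W.verts then G.neighborSet v
  else {x | x ∉ outerPart G C W ∧ ∃ d ∈ outerPart G C W, G.Adj d x}

/-- `W₁` (a wedge anchored in `u`) improves `W₂` (a wedge anchored in `v`):
`W₁ - u` is a proper subgraph of `W₂ - v`. -/
def Improves (G : SimpleGraph V) (W₁ : G.Subgraph) (u : V) (W₂ : G.Subgraph) (v : V) : Prop :=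
  W₁.deleteVerts {u} ≤ W₂.deleteVerts {v} ∧ W₁.deleteVerts {u} ≠ W₂.deleteVerts {v}

/-- A vertex is good w.r.t. a wedge-selection `σ` if it is minimal in the
improvement order. -/
def GoodVertex (G : SimpleGraph V) (I : Set V) (σ : V → G.Subgraph) (u : V) : Prop :=
  u ∈ I ∧ ∀ x ∈ I, ¬ Improves G (σ x) x (σ u) u



lemma even_sum_adj_aux {α : Type*} [DecidableEq α] (R : α → α → Prop) [DecidableRel R]
    (hs : Symmetric R) (hi : ∀ x, ¬ R x x) (T : Finset α) :
    Even (∑ t ∈ T, (T.filter (fun s => R t s)).card) := by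
  classical
  induction T using Finset.induction_on with
  | empty => simp
  | insert x T hx ih =>
    rw [Finset.sum_insert hx]
    have h1 : ((insert x T).filter (fun s => R x s)).card = (T.filter (fun s => R x s)).card := by
      rw [Finset.filter_insert, if_neg (hi x)]
    have h2 : ∀ t ∈ T, ((insert x T).filter (fun s => R t s)).card
        = (T.filter (fun s => R t s)).card + (if R t x then 1 else 0) := by
      intro t ht
      rw [Finset.filter_insert]
      by_cases hR : R t x
      · rw [if_pos hR, Finset.card_insert_of_notMem (by simp [hx]), if_pos hR]
      · rw [if_neg hR, if_neg hR, Nat.add_zero]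
    rw [h1, Finset.sum_congr rfl h2, Finset.sum_add_distrib]
    have h3 : (∑ t ∈ T, if R t x then 1 else 0) = (T.filter (fun s => R x s)).card := by
      rw [Finset.card_filter]
      exact Finset.sum_congr rfl fun t _ => by
        by_cases hR : R t x
        · rw [if_pos hR, if_pos (hs hR)]
        · rw [if_neg hR, if_neg (fun h => hR (hs h))]
    rw [h3]
    obtain ⟨k, hk⟩ := ih
    exact ⟨k + (T.filter (fun s => R x s)).card, by omega⟩

lemma exists_adj_boundary {α : Type*} {H : SimpleGraph α} (P : Set α) {x z : α}
    (q : H.Walk x z) (hx : x ∈ P) (hz : z ∉ P) :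
    ∃ d s, d ∈ P ∧ s ∉ P ∧ H.Adj d s := by
  induction q with
  | nil => exact absurd hx hz
  | @cons u w c hadj q ih =>
    by_cases hw : w ∈ P
    · exact ih hw hz
    · exact ⟨u, w, hx, hw, hadj⟩

lemma key_boundary [Finite V] (G : SimpleGraph V) (C : Set V) (W : G.Subgraph) (v : V)
    (hCconn : (G.induce C).Connected)
    (hCdeg : ∀ x ∈ C, (G.neighborSet x ∩ C).ncard = 2)
    (hvnC : v ∉ C)
    (hWsub : ∀ x ∈ W.verts, x ≠ v → x ∈ C)
    (hWdeg : ∀ x ∈ W.verts, (W.neighborSet x).ncard = 2)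
    (hvW : v ∈ W.verts)
    (hWN : (W.verts ∩ G.neighborSet v).ncard = 2)
    (c₀ : V) (hc₀C : c₀ ∈ C) (hc₀W : c₀ ∉ W.verts)
    (y : V) (hyv : G.Adj v y) (hyW : y ∈ W.verts) :
    ∃ z, z ∈ C ∧ z ∉ W.verts ∧ G.Adj y z := by
  classical
  set T : Set V := W.verts ∩ C with hT
  have hyC : y ∈ C := hWsub y hyW (Ne.symm hyv.ne)
  have hyT : y ∈ T := ⟨hyW, hyC⟩
  have hT_eq : T = W.verts \ {v} := by
    ext x
    constructor
    · rintro ⟨h1, h2⟩; exact ⟨h1, fun hxv => hvnC (by rwa [Set.mem_singleton_iff.mp hxv] at h2)⟩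
    · rintro ⟨h1, h2⟩; exact ⟨h1, hWsub x h1 h2⟩
  -- W.neighborSet v = W.verts ∩ G.neighborSet v
  have hNv : W.neighborSet v = W.verts ∩ G.neighborSet v := by
    refine Set.eq_of_subset_of_ncard_le ?_ ?_ (Set.toFinite _)
    · intro t ht
      exact ⟨W.neighborSet_subset_verts v ht, (SimpleGraph.Subgraph.Adj.adj_sub ht : G.Adj v t)⟩
    · rw [hWN, hWdeg v hvW]
  -- intersect neighborhoods with T
  have hnbT : ∀ t, W.neighborSet t ∩ T = W.neighborSet t \ {v} := by
    intro t
    rw [hT_eq]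
    ext x
    constructor
    · rintro ⟨h1, h2, h3⟩; exact ⟨h1, h3⟩
    · rintro ⟨h1, h2⟩; exact ⟨h1, W.neighborSet_subset_verts t h1, h2⟩
  have hdW : ∀ t ∈ T, (W.neighborSet t ∩ T).ncard + (if W.Adj t v then 1 else 0) = 2 := by
    intro t ht
    rw [hnbT t]
    by_cases hA : W.Adj t v
    · rw [if_pos hA, Set.ncard_diff_singleton_of_mem (show v ∈ W.neighborSet t from hA),
        hWdeg t ht.1]
    · rw [if_neg hA]
      have : W.neighborSet t \ {v} = W.neighborSet t := by
        apply Set.diff_singleton_eq_self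
        exact fun hv => hA (hv : W.Adj t v)
      rw [this, hWdeg t ht.1, Nat.add_zero]
  set Tf : Finset V := (Set.toFinite T).toFinset with hTf
  have hmemTf : ∀ x, x ∈ Tf ↔ x ∈ T := fun x => Set.Finite.mem_toFinset _
  -- number of t in T adjacent (in W) to v is 2
  have hfilt : (Tf.filter (fun t => W.Adj t v)) = (Set.toFinite (W.neighborSet v)).toFinset := by
    ext x
    simp only [Finset.mem_filter, Set.Finite.mem_toFinset, hmemTf]
    constructor
    · rintro ⟨_, h2⟩; exact h2.symm
    · intro h
      have hxW : x ∈ W.verts := W.neighborSet_subset_verts v h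
      exact ⟨⟨hxW, hWsub x hxW (fun he => G.irrefl (he ▸ h.adj_sub))⟩, h.symm⟩
  have hfiltcard : (Tf.filter (fun t => W.Adj t v)).card = 2 := by
    rw [hfilt, ← Set.ncard_eq_toFinset_card, hNv, hWN]
  -- s₂
  have hs2 : (∑ t ∈ Tf, (W.neighborSet t ∩ T).ncard) + 2 = 2 * Tf.card := by
    have hsum := Finset.sum_congr (rfl : Tf = Tf) (fun t ht => hdW t ((hmemTf t).mp ht))
    rw [Finset.sum_add_distrib] at hsum
    have hind : (∑ x ∈ Tf, if W.Adj x v then 1 else 0) = 2 := by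
      rw [← hfiltcard, Finset.card_filter]
    rw [hind, Finset.sum_const, smul_eq_mul] at hsum
    omega
  -- s₂ ≤ s₁ pointwise
  have hpw : ∀ t ∈ Tf, (W.neighborSet t ∩ T).ncard ≤ (G.neighborSet t ∩ T).ncard := by
    intro t _
    exact Set.ncard_le_ncard (fun x hx => ⟨hx.1.adj_sub, hx.2⟩) (Set.toFinite _)
  have hs12 : (∑ t ∈ Tf, (W.neighborSet t ∩ T).ncard) ≤ ∑ t ∈ Tf, (G.neighborSet t ∩ T).ncard :=
    Finset.sum_le_sum hpw
  -- evenness of s₁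
  have heven : Even (∑ t ∈ Tf, (G.neighborSet t ∩ T).ncard) := by
    have hrw : ∀ t ∈ Tf, (G.neighborSet t ∩ T).ncard = (Tf.filter (fun s => G.Adj t s)).card := by
      intro t _
      rw [Set.ncard_eq_toFinset_card]
      congr 1
      ext x
      simp only [Set.Finite.mem_toFinset, Finset.mem_filter, hmemTf]
      exact ⟨fun ⟨h1, h2⟩ => ⟨h2, h1⟩, fun ⟨h1, h2⟩ => ⟨h2, h1⟩⟩
    rw [Finset.sum_congr rfl hrw]
    exact even_sum_adj_aux G.Adj (fun _ _ h => h.symm) (fun x => G.irrefl) Tf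
  -- a boundary vertex t* with a C-neighbour outside W
  obtain ⟨d, s, hdP, hsP, hds⟩ :=
    exists_adj_boundary (H := G.induce C) {x : ↥C | (x : V) ∈ W.verts}
      ((hCconn.preconnected ⟨y, hyC⟩ ⟨c₀, hc₀C⟩).some) hyW hc₀W
  have hadjds : G.Adj (d : V) (s : V) := hds
  have hts : (d : V) ∈ T := ⟨hdP, d.2⟩
  have hsC : (s : V) ∈ C := s.2
  -- strict bound at t*
  have hdGstar : (G.neighborSet (d : V) ∩ T).ncard < 2 := by
    have hsub : G.neighborSet (d : V) ∩ T ⊆ (G.neighborSet (d : V) ∩ C) \ {(s : V)} := by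
      rintro z ⟨h1, h2⟩
      refine ⟨⟨h1, h2.2⟩, fun hz => hsP ?_⟩
      rw [Set.mem_singleton_iff.mp hz] at h2
      exact h2.1
    have h1 : ((G.neighborSet (d : V) ∩ C) \ {(s : V)}).ncard = 1 := by
      rw [Set.ncard_diff_singleton_of_mem
        (show (s : V) ∈ G.neighborSet (d : V) ∩ C from ⟨hadjds, hsC⟩), hCdeg (d : V) d.2]
    have := Set.ncard_le_ncard hsub (Set.toFinite _)
    omega
  have hs1lt : (∑ t ∈ Tf, (G.neighborSet t ∩ T).ncard) < 2 * Tf.card := by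
    calc (∑ t ∈ Tf, (G.neighborSet t ∩ T).ncard) < ∑ _t ∈ Tf, 2 := by
          apply Finset.sum_lt_sum
          · intro t ht
            have htC : t ∈ C := ((hmemTf t).mp ht).2
            have : G.neighborSet t ∩ T ⊆ G.neighborSet t ∩ C := fun x hx => ⟨hx.1, hx.2.2⟩
            calc (G.neighborSet t ∩ T).ncard ≤ (G.neighborSet t ∩ C).ncard :=
                  Set.ncard_le_ncard this (Set.toFinite _)
              _ = 2 := hCdeg t htC
          · exact ⟨(d : V), (hmemTf _).mpr hts, hdGstar⟩
      _ = 2 * Tf.card := by rw [Finset.sum_const, smul_eq_mul, mul_comm]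
  -- conclude s₁ = s₂
  obtain ⟨k, hk⟩ := heven
  have hs1s2 : (∑ t ∈ Tf, (G.neighborSet t ∩ T).ncard)
      = ∑ t ∈ Tf, (W.neighborSet t ∩ T).ncard := by omega
  -- equality at y
  have hyeq : (G.neighborSet y ∩ T).ncard = (W.neighborSet y ∩ T).ncard := by
    by_contra hne
    have hlt : (W.neighborSet y ∩ T).ncard < (G.neighborSet y ∩ T).ncard :=
      lt_of_le_of_ne (hpw y ((hmemTf y).mpr hyT)) (Ne.symm hne)
    have : (∑ t ∈ Tf, (W.neighborSet t ∩ T).ncard) < ∑ t ∈ Tf, (G.neighborSet t ∩ T).ncard :=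
      Finset.sum_lt_sum hpw ⟨y, (hmemTf y).mpr hyT, hlt⟩
    omega
  -- dW y = 1
  have hyvW : W.Adj y v := by
    have : y ∈ W.neighborSet v := by rw [hNv]; exact ⟨hyW, hyv⟩
    exact this.symm
  have hdWy : (W.neighborSet y ∩ T).ncard = 1 := by
    rw [hnbT y, Set.ncard_diff_singleton_of_mem (show v ∈ W.neighborSet y from hyvW),
      hWdeg y hyW]
  -- finish
  by_contra hcon
  push_neg at hcon
  have hsub : G.neighborSet y ∩ C ⊆ G.neighborSet y ∩ T := by
    rintro z ⟨h1, h2⟩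
    by_cases hzW : z ∈ W.verts
    · exact ⟨h1, hzW, h2⟩
    · exact absurd h1 (fun h => (hcon z h2 hzW) h)
  have := Set.ncard_le_ncard hsub (Set.toFinite _)
  rw [hCdeg y hyC, hyeq, hdWy] at this
  omega

lemma walk_meets_boundary {G : SimpleGraph V} (A : Set V) {a b : V} (p : G.Walk a b)
    (ha : a ∈ A) (hb : b ∉ A) : ∃ x ∈ p.support, x ∉ A ∧ ∃ d ∈ A, G.Adj d x := by
  induction p with
  | nil => exact absurd ha hb
  | @cons u w c hadj q ih =>
    by_cases hw : w ∈ A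
    · obtain ⟨x, hx, hx2⟩ := ih hw hb
      exact ⟨x, by simp [hx], hx2⟩
    · exact ⟨w, by simp, hw, u, ha, hadj⟩

/-- the barrier of a wedge separates every non-attached vertex of
`I` from `W ∩ C`. -/
theorem barrier_separates [Finite V] (G : SimpleGraph V) (C I : Set V)
    (hcob : IsCobweb G C I) (W : G.Subgraph) (v : V) (hW : IsWedge G C I W v)
    (u : V) (hu : u ∈ I) (hatt : ¬ Attaches G u W) :
    Separates G (barrier G C W v) {u} (W.verts ∩ C) := by
  classical
  obtain ⟨⟨hCconn, hCdeg⟩, hIC, hIne, hIind, hmindeg, hnsub⟩ := hcob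
  obtain ⟨⟨hWconn, hWdeg⟩, hvI, hWI, hWN⟩ := hW
  have hIcomp : ∀ x, x ∈ I ↔ x ∉ C := by
    intro x; rw [hIC]; exact Iff.rfl
  have hvnC : v ∉ C := (hIcomp v).mp hvI
  have hNC : ∀ x ∈ I, G.neighborSet x ⊆ C := by
    intro x hx w hw
    by_contra hwC
    exact hIind x hx w ((hIcomp w).mpr hwC) hw
  have hvW : v ∈ W.verts := by
    have : v ∈ W.verts ∩ I := by rw [hWI]; exact Set.mem_singleton v
    exact this.1
  have hWsub : ∀ x ∈ W.verts, x ≠ v → x ∈ C := by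
    intro x hx hxv
    by_contra hxC
    have : x ∈ W.verts ∩ I := ⟨hx, (hIcomp x).mpr hxC⟩
    rw [hWI] at this
    exact hxv this
  intro a ha b hb p
  rw [Set.mem_singleton_iff] at ha
  by_cases hco : C ⊆ W.verts
  · -- co-trivial case : barrier is N(v)
    simp only [barrier, if_pos hco]
    by_cases huv : a = v
    · cases p with
      | nil => exact absurd (huv ▸ hb.2 : v ∈ C) hvnC
      | @cons _ w _ h q =>
        refine ⟨w, ?_, (huv ▸ h : G.Adj v w)⟩
        rw [Walk.support_cons]
        exact List.mem_cons_of_mem _ q.start_mem_support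
    · exfalso
      apply hatt
      constructor
      · intro huW
        have h2 : u ∈ W.verts ∩ I := ⟨huW, hu⟩
        rw [hWI] at h2
        exact huv (ha.trans h2)
      · exact fun w hw => hco (hNC u hu hw)
  · -- non-co-trivial case
    simp only [barrier, if_neg hco]
    rw [Set.not_subset] at hco
    obtain ⟨c₀, hc₀C, hc₀W⟩ := hco
    have houtC : ∀ c ∈ C, c ∉ W.verts → c ∈ outerPart G C W := by
      intro c hc hcW
      refine ⟨hcW, c, hc, hcW, Walk.nil, ?_⟩
      intro x hx
      simp only [Walk.support_nil, List.mem_singleton] at hx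
      subst hx
      exact hcW
    have houtW : ∀ x ∈ W.verts, x ∉ outerPart G C W := fun x hx hout => hout.1 hx
    by_cases huW : u ∈ W.verts
    · -- then u = v
      have huv : u = v := by
        have h2 : u ∈ W.verts ∩ I := ⟨huW, hu⟩
        rw [hWI] at h2
        exact h2
      have hav : a = v := ha.trans huv
      by_cases hNall : ∀ w ∈ G.neighborSet v, w ∈ W.verts
      · cases p with
        | nil => exact absurd (hav ▸ hb.2 : v ∈ C) hvnC
        | @cons _ w _ h q =>
          have hvw : G.Adj v w := hav ▸ h
          have hwW : w ∈ W.verts := hNall w hvw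
          obtain ⟨z, hzC, hzW, hyz⟩ := key_boundary G C W v hCconn hCdeg hvnC hWsub hWdeg
            hvW hWN c₀ hc₀C hc₀W w hvw hwW
          refine ⟨w, ?_, houtW w hwW, z, houtC z hzC hzW, hyz.symm⟩
          rw [Walk.support_cons]
          exact List.mem_cons_of_mem _ q.start_mem_support
      · push_neg at hNall
        obtain ⟨w, hwN, hwW⟩ := hNall
        refine ⟨a, p.start_mem_support, ?_⟩
        rw [hav]
        exact ⟨houtW v hvW, w, houtC w (hNC v hvI hwN) hwW, hwN.symm⟩
    · -- u ∉ W.verts : u lies in the outer part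
      have hNu : ¬ G.neighborSet u ⊆ W.verts := fun hsub => hatt ⟨huW, hsub⟩
      rw [Set.not_subset] at hNu
      obtain ⟨w, hwN, hwW⟩ := hNu
      have huOut : u ∈ outerPart G C W := by
        refine ⟨huW, w, hNC u hu hwN, hwW, Walk.cons hwN Walk.nil, ?_⟩
        intro x hx
        change x ∈ [u, w] at hx
        simp only [Walk.support_cons, Walk.support_nil, List.mem_cons,
          List.mem_singleton, List.not_mem_nil, or_false] at hx
        rcases hx with rfl | rfl
        · exact huW
        · exact hwW
      have haOut : a ∈ outerPart G C W := by rw [ha]; exact huOut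
      have hbOut : b ∉ outerPart G C W := houtW b hb.1
      obtain ⟨x, hxs, hxA, d, hd, hadj⟩ := walk_meets_boundary (outerPart G C W) p haOut hbOut
      exact ⟨x, hxs, hxA, d, hd, hadj⟩
end

section
/- Let G be a cobweb with presentation (C, I) and let σ be a wedge-selection for (G, C, I). Let u, v ∈ I be distinct with u attaching to σ(v). Then exactly one of the following holds: σ(u) improves σ(v), or v attaches to σ(u). -/
open SimpleGraph

variable {V : Type}

-- ### Auxiliary machinery ###



/-- A walk between `x` and `y` all of whose vertices lie in `S`. -/
def WalkIn (G : SimpleGraph V) (S : Set V) (x y : V) : Prop :=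
  ∃ p : G.Walk x y, ∀ z ∈ p.support, z ∈ S

namespace WalkIn

variable {G : SimpleGraph V} {S T : Set V} {x y z w : V}

lemma refl (h : x ∈ S) : WalkIn G S x x :=
  ⟨Walk.nil, by simp [h]⟩

lemma start_mem (h : WalkIn G S x y) : x ∈ S := by
  obtain ⟨p, hp⟩ := h; exact hp x p.start_mem_support

lemma end_mem (h : WalkIn G S x y) : y ∈ S := by
  obtain ⟨p, hp⟩ := h; exact hp y p.end_mem_support

lemma symm (h : WalkIn G S x y) : WalkIn G S y x := by
  obtain ⟨p, hp⟩ := h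
  exact ⟨p.reverse, by intro u hu; rw [Walk.support_reverse] at hu; exact hp u (List.mem_reverse.mp hu)⟩

lemma trans (h1 : WalkIn G S x y) (h2 : WalkIn G S y z) : WalkIn G S x z := by
  obtain ⟨p, hp⟩ := h1; obtain ⟨q, hq⟩ := h2
  refine ⟨p.append q, ?_⟩
  intro u hu
  rw [Walk.mem_support_append_iff] at hu
  rcases hu with hu | hu
  · exact hp u hu
  · exact hq u hu

lemma cons (h : G.Adj x w) (hx : x ∈ S) (hw : WalkIn G S w y) : WalkIn G S x y := by
  obtain ⟨p, hp⟩ := hw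
  refine ⟨Walk.cons h p, ?_⟩
  intro u hu
  rw [Walk.support_cons] at hu
  rcases List.mem_cons.mp hu with rfl | hu
  · exact hx
  · exact hp u hu

lemma extend (h : WalkIn G S x y) (hadj : G.Adj y z) (hz : z ∈ S) : WalkIn G S x z :=
  (cons hadj.symm hz h.symm).symm

lemma mono (hST : S ⊆ T) (h : WalkIn G S x y) : WalkIn G T x y := by
  obtain ⟨p, hp⟩ := h; exact ⟨p, fun u hu => hST (hp u hu)⟩

end WalkIn

/-- Crossing lemma: a walk inside `S` from outside `T` into `T` crosses the boundary,
and the part before the first crossing stays in `S \ T`. -/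
lemma walk_crossing {G : SimpleGraph V} {S T : Set V} :
    ∀ {x y : V} (p : G.Walk x y), (∀ z ∈ p.support, z ∈ S) → x ∉ T → y ∈ T →
      ∃ z z', G.Adj z z' ∧ z ∈ S ∧ z ∉ T ∧ z' ∈ S ∧ z' ∈ T ∧ WalkIn G (S \ T) x z := by
  intro x y p
  induction p with
  | nil => intro _ hx hy; exact absurd hy hx
  | @cons a w b h q ih =>
    intro hp hx hy
    have ha : a ∈ S := hp a (by simp [Walk.support_cons])
    have hq : ∀ z ∈ q.support, z ∈ S := by
      intro z hz; exact hp z (by simp [Walk.support_cons, hz])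
    by_cases hw : w ∈ T
    · exact ⟨a, w, h, ha, hx, hq w q.start_mem_support, hw, WalkIn.refl ⟨ha, hx⟩⟩
    · obtain ⟨z, z', hadj, hz1, hz2, hz3, hz4, hwalk⟩ := ih hq hw hy
      exact ⟨z, z', hadj, hz1, hz2, hz3, hz4, WalkIn.cons h ⟨ha, hx⟩ hwalk⟩


section Parity
variable {G : SimpleGraph V}

lemma handshake_even [Fintype V] [DecidableRel G.Adj] (S : Finset V) :
    Even (∑ z ∈ S, (S.filter (G.Adj z)).card) := by
  classical
  induction S using Finset.induction with
  | empty => simp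
  | insert _ _ hw _ =>
    rename_i w S' ih
    have hfw : ∀ z : V, (Finset.filter (G.Adj z) (insert w S')).card
        = (S'.filter (G.Adj z)).card + (if G.Adj z w then 1 else 0) := by
      intro z
      rw [Finset.filter_insert]
      by_cases h : G.Adj z w
      · rw [if_pos h, Finset.card_insert_of_notMem (by simp [hw]), if_pos h]
      · rw [if_neg h, if_neg h, add_zero]
    have h1 : ((insert w S').filter (G.Adj w)).card = (S'.filter (G.Adj w)).card := by
      rw [hfw w, if_neg (G.loopless.irrefl w), add_zero]
    have h2 : ∑ z ∈ S', ((insert w S').filter (G.Adj z)).card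
        = (∑ z ∈ S', (S'.filter (G.Adj z)).card) + (S'.filter (fun z => G.Adj z w)).card := by
      rw [Finset.sum_congr rfl (fun z _ => hfw z), Finset.sum_add_distrib]
      congr 1
      rw [Finset.card_filter]
    have h3 : (S'.filter (fun z => G.Adj z w)).card = (S'.filter (G.Adj w)).card := by
      congr 1
      exact Finset.filter_congr (fun z _ => by rw [G.adj_comm])
    rw [Finset.sum_insert hw, h1, h2, h3]
    obtain ⟨k, hk⟩ := ih
    exact ⟨k + (S'.filter (G.Adj w)).card, by omega⟩

lemma sum_adj_comm [Fintype V] [DecidableRel G.Adj] (S T : Finset V) :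
    ∑ z ∈ S, (T.filter (G.Adj z)).card = ∑ y ∈ T, (S.filter (G.Adj y)).card := by
  classical
  simp only [Finset.card_filter]
  rw [Finset.sum_comm]
  refine Finset.sum_congr rfl fun y _ => Finset.sum_congr rfl fun z _ => ?_
  exact if_congr (G.adj_comm z y) rfl rfl

lemma engineF [Fintype V] [DecidableRel G.Adj] (CF S T : Finset V) (hS : S ⊆ CF) (hT : T ⊆ CF)
    (hTS : ∀ y ∈ T, y ∉ S)
    (hdeg : ∀ z ∈ S, (CF.filter (G.Adj z)).card = 2)
    (hexit : ∀ z ∈ S, ∀ y ∈ CF, G.Adj z y → y ∉ S → y ∈ T) :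
    Even (∑ y ∈ T, (S.filter (G.Adj y)).card) := by
  classical
  have key : ∀ z ∈ S, (CF.filter (G.Adj z)).card
      = (S.filter (G.Adj z)).card + (T.filter (G.Adj z)).card := by
    intro z hz
    have hdisj : Disjoint (S.filter (G.Adj z)) (T.filter (G.Adj z)) := by
      rw [Finset.disjoint_left]
      intro y hy hy'
      exact hTS y (Finset.mem_filter.mp hy').1 (Finset.mem_filter.mp hy).1
    rw [← Finset.card_union_of_disjoint hdisj]
    congr 1
    ext y
    simp only [Finset.mem_filter, Finset.mem_union]
    constructor
    · rintro ⟨hyCF, hadj⟩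
      by_cases hyS : y ∈ S
      · exact Or.inl ⟨hyS, hadj⟩
      · exact Or.inr ⟨hexit z hz y hyCF hadj hyS, hadj⟩
    · rintro (⟨hyS, hadj⟩ | ⟨hyT, hadj⟩)
      · exact ⟨hS hyS, hadj⟩
      · exact ⟨hT hyT, hadj⟩
  have h1 : ∑ z ∈ S, (CF.filter (G.Adj z)).card = 2 * S.card := by
    rw [Finset.sum_congr rfl hdeg, Finset.sum_const, smul_eq_mul, mul_comm]
  have h2 : ∑ z ∈ S, (CF.filter (G.Adj z)).card
      = (∑ z ∈ S, (S.filter (G.Adj z)).card) + ∑ z ∈ S, (T.filter (G.Adj z)).card := by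
    rw [Finset.sum_congr rfl key, Finset.sum_add_distrib]
  have heven : Even (∑ z ∈ S, (T.filter (G.Adj z)).card) := by
    obtain ⟨k, hk⟩ := handshake_even (G := G) S
    refine ⟨S.card - k, ?_⟩
    omega
  rwa [sum_adj_comm] at heven

lemma ncard_nbr_inter [Fintype V] [DecidableRel G.Adj] (y : V) (S : Finset V) :
    (G.neighborSet y ∩ ↑S).ncard = (S.filter (G.Adj y)).card := by
  classical
  rw [← Set.ncard_coe_finset]
  congr 1
  ext z
  simp only [Finset.coe_filter, Set.mem_inter_iff, mem_neighborSet, Set.mem_setOf_eq,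
    Finset.mem_coe]
  tauto

lemma engine2 [Finite V] {G : SimpleGraph V} {Cs S : Set V} {y1 y2 : V} (hy : y1 ≠ y2)
    (hS : S ⊆ Cs) (hy1 : y1 ∈ Cs) (hy2 : y2 ∈ Cs) (hy1S : y1 ∉ S) (hy2S : y2 ∉ S)
    (hdeg : ∀ z ∈ S, (G.neighborSet z ∩ Cs).ncard = 2)
    (hexit : ∀ z ∈ S, ∀ y, G.Adj z y → y ∈ Cs → y ∉ S → y = y1 ∨ y = y2) :
    Even ((G.neighborSet y1 ∩ S).ncard + (G.neighborSet y2 ∩ S).ncard) := by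
  have : Fintype V := Fintype.ofFinite V
  classical
  have hSC : (↑(Set.toFinite S).toFinset : Set V) = S := Set.Finite.coe_toFinset _
  have hCC : (↑(Set.toFinite Cs).toFinset : Set V) = Cs := Set.Finite.coe_toFinset _
  have hE := engineF (G := G) (Set.toFinite Cs).toFinset (Set.toFinite S).toFinset {y1, y2}
    (by intro z hz; rw [Set.Finite.mem_toFinset] at hz ⊢; exact hS hz)
    (by intro z hz; rw [Set.Finite.mem_toFinset]
        rcases Finset.mem_insert.mp hz with rfl | hz
        · exact hy1
        · rw [Finset.mem_singleton] at hz; subst hz; exact hy2)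
    (by intro z hz; rw [Set.Finite.mem_toFinset]
        rcases Finset.mem_insert.mp hz with rfl | hz
        · exact hy1S
        · rw [Finset.mem_singleton] at hz; subst hz; exact hy2S)
    (by intro z hz; rw [Set.Finite.mem_toFinset] at hz
        rw [← ncard_nbr_inter, hCC]; exact hdeg z hz)
    (by intro z hz y hyC hadj hyS
        rw [Set.Finite.mem_toFinset] at hz hyC
        rw [Set.Finite.mem_toFinset] at hyS
        rcases hexit z hz y hadj hyC hyS with rfl | rfl
        · exact Finset.mem_insert_self _ _
        · exact Finset.mem_insert_of_mem (Finset.mem_singleton_self _))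
  rw [Finset.sum_pair hy] at hE
  rw [← ncard_nbr_inter y1, ← ncard_nbr_inter y2, hSC] at hE
  exact hE

lemma engine1 [Finite V] {G : SimpleGraph V} {Cs S : Set V} {y1 : V}
    (hS : S ⊆ Cs) (hy1 : y1 ∈ Cs) (hy1S : y1 ∉ S)
    (hdeg : ∀ z ∈ S, (G.neighborSet z ∩ Cs).ncard = 2)
    (hexit : ∀ z ∈ S, ∀ y, G.Adj z y → y ∈ Cs → y ∉ S → y = y1) :
    Even ((G.neighborSet y1 ∩ S).ncard) := by
  have : Fintype V := Fintype.ofFinite V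
  classical
  have hSC : (↑(Set.toFinite S).toFinset : Set V) = S := Set.Finite.coe_toFinset _
  have hCC : (↑(Set.toFinite Cs).toFinset : Set V) = Cs := Set.Finite.coe_toFinset _
  have hE := engineF (G := G) (Set.toFinite Cs).toFinset (Set.toFinite S).toFinset {y1}
    (by intro z hz; rw [Set.Finite.mem_toFinset] at hz ⊢; exact hS hz)
    (by intro z hz; rw [Finset.mem_singleton] at hz; subst hz
        rw [Set.Finite.mem_toFinset]; exact hy1)
    (by intro z hz; rw [Finset.mem_singleton] at hz; subst hz
        rw [Set.Finite.mem_toFinset]; exact hy1S)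
    (by intro z hz; rw [Set.Finite.mem_toFinset] at hz
        rw [← ncard_nbr_inter, hCC]; exact hdeg z hz)
    (by intro z hz y hyC hadj hyS
        rw [Set.Finite.mem_toFinset] at hz hyC
        rw [Set.Finite.mem_toFinset] at hyS
        rw [Finset.mem_singleton]
        exact hexit z hz y hadj hyC hyS)
  rw [Finset.sum_singleton] at hE
  rw [← ncard_nbr_inter y1, hSC] at hE
  exact hE

end Parity


section CycleConn
variable {α : Type}

lemma cycle_delete_conn [Finite α] (Γ : SimpleGraph α) (hc : Γ.Connected)
    (h2 : ∀ x : α, (Γ.neighborSet x).ncard = 2) (e : α) :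
    ∀ x y : α, x ≠ e → y ≠ e → WalkIn Γ {z | z ≠ e} x y := by
  classical
  obtain ⟨p0, q0, hpq, hNe⟩ := Set.ncard_eq_two.mp (h2 e)
  have hadj_p : Γ.Adj e p0 := by
    have : p0 ∈ Γ.neighborSet e := by rw [hNe]; exact Set.mem_insert _ _
    exact this
  set D : Set α := {z | z ≠ e} with hD
  set K : Set α := {z | WalkIn Γ D p0 z} with hK
  have hp0D : p0 ∈ D := hadj_p.ne'
  have hp0K : p0 ∈ K := WalkIn.refl hp0D
  have hKD : K ⊆ D := fun z hz => hz.end_mem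
  have hclose : ∀ z ∈ K, ∀ y, Γ.Adj z y → y ≠ e → y ∈ K := by
    intro z hz y hadj hy
    exact WalkIn.extend hz hadj hy
  have heK : e ∉ K := fun h => (hKD h) rfl
  have heven : Even ((Γ.neighborSet e ∩ K).ncard) := by
    apply engine1 (Cs := (Set.univ : Set α))
    · exact fun _ _ => Set.mem_univ _
    · exact Set.mem_univ _
    · exact heK
    · intro z _; rw [Set.inter_univ]; exact h2 z
    · intro z hz y hadj _ hyK
      by_contra hye
      exact hyK (hclose z hz y hadj hye)
  have hpos : 0 < (Γ.neighborSet e ∩ K).ncard := by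
    rw [Set.ncard_pos (Set.toFinite _)]
    exact ⟨p0, hadj_p, hp0K⟩
  have hge2 : 2 ≤ (Γ.neighborSet e ∩ K).ncard := by
    obtain ⟨k, hk⟩ := heven; omega
  have heq : Γ.neighborSet e ∩ K = Γ.neighborSet e := by
    apply Set.eq_of_subset_of_ncard_le Set.inter_subset_left _ (Set.toFinite _)
    rw [h2 e]; exact hge2
  have hPQ : ∀ s, Γ.Adj e s → s ∈ K := by
    intro s hs
    have : s ∈ Γ.neighborSet e ∩ K := by rw [heq]; exact hs
    exact this.2
  have main : ∀ n (s w : α), s ∈ K → w ≠ e → ∀ pw : Γ.Walk s w, pw.length ≤ n → w ∈ K := by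
    intro n
    induction n with
    | zero =>
      intro s w hs hw pw hl
      cases pw with
      | nil => exact hs
      | cons h rest => simp [Walk.length_cons] at hl
    | succ n ih =>
      intro s w hs hw pw hl
      cases pw with
      | nil => exact hs
      | @cons _ t _ h rest =>
        by_cases ht : t = e
        · subst ht
          cases rest with
          | nil => exact absurd rfl hw
          | @cons _ t' _ h' rest' =>
            have ht' : t' ∈ K := hPQ t' h'
            refine ih t' w ht' hw rest' ?_
            simp only [Walk.length_cons] at hl
            omega
        · have htK : t ∈ K := hclose s hs t h ht
          refine ih t w htK hw rest ?_
          simp only [Walk.length_cons] at hl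
          omega
  intro x y hx hy
  obtain ⟨px⟩ := hc.preconnected p0 x
  obtain ⟨py⟩ := hc.preconnected p0 y
  have hxK : x ∈ K := main px.length p0 x hp0K hx px le_rfl
  have hyK : y ∈ K := main py.length p0 y hp0K hy py le_rfl
  exact (WalkIn.symm hxK).trans hyK

end CycleConn
section SubgraphGlue
variable {G : SimpleGraph V}

lemma coe_nbr_ncard (W : G.Subgraph) (x : W.verts) :
    (W.coe.neighborSet x).ncard = (W.neighborSet ↑x).ncard := by
  rw [← Nat.card_coe_set_eq, ← Nat.card_coe_set_eq]
  exact Nat.card_congr (Subgraph.coeNeighborSetEquiv x)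

lemma cycleSubgraph_del_conn [Finite V] {W : G.Subgraph} (hW : IsCycleSubgraph G W)
    {w : V} (hw : w ∈ W.verts) {x y : V}
    (hx : x ∈ W.verts) (hxw : x ≠ w) (hy : y ∈ W.verts) (hyw : y ≠ w) :
    WalkIn G (W.verts \ {w}) x y := by
  obtain ⟨p, hp⟩ := cycle_delete_conn W.coe hW.1
      (fun z => by rw [coe_nbr_ncard]; exact hW.2 z z.2) ⟨w, hw⟩ ⟨x, hx⟩ ⟨y, hy⟩
      (fun h => hxw (congrArg Subtype.val h)) (fun h => hyw (congrArg Subtype.val h))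
  refine ⟨p.map W.hom, ?_⟩
  intro z hz
  replace hz : z ∈ p.support.map W.hom := by rw [← Walk.support_map]; exact hz
  obtain ⟨z', hz', rfl⟩ := List.mem_map.mp hz
  exact ⟨z'.2, fun hzz => (hp z' hz') (Subtype.ext hzz)⟩

lemma induce_conn {C : Set V} (h : (G.induce C).Connected) {x y : V}
    (hx : x ∈ C) (hy : y ∈ C) : WalkIn G C x y := by
  obtain ⟨p⟩ := h.preconnected ⟨x, hx⟩ ⟨y, hy⟩
  refine ⟨p.map ⟨Subtype.val, ?_⟩, ?_⟩
  · intro a b hab; exact hab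
  · intro z hz; rw [Walk.support_map] at hz
    obtain ⟨z', _, rfl⟩ := List.mem_map.mp hz; exact z'.2

lemma delete_nbrs (W : G.Subgraph) (w z : V) (hz : z ≠ w) :
    (W.deleteVerts {w}).neighborSet z = W.neighborSet z \ {w} := by
  ext y
  simp only [Subgraph.mem_neighborSet, Subgraph.deleteVerts_adj, Set.mem_diff,
    Set.mem_singleton_iff]
  constructor
  · rintro ⟨_, _, _, hyw, hadj⟩; exact ⟨hadj, hyw⟩
  · rintro ⟨hadj, hyw⟩
    exact ⟨W.edge_vert hadj, hz, W.edge_vert (W.adj_symm hadj), hyw, hadj⟩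

lemma wedge_facts [Finite V] {C I : Set V} {W : G.Subgraph} {w : V}
    (hcyc : IsInducedCycle G C) (hIc : I = Cᶜ) (hW : IsWedge G C I W w) :
    ∃ a b : V, a ≠ b ∧ W.neighborSet w = {a, b} ∧ W.verts ∩ G.neighborSet w = {a, b} ∧
      w ∈ W.verts ∧ W.verts \ {w} ⊆ C ∧
      (∀ z, z ∈ W.verts \ {w} → z ≠ a → z ≠ b →
        W.neighborSet z = G.neighborSet z ∩ C ∧ G.neighborSet z ∩ C ⊆ W.verts \ {w}) ∧
      (∀ c, c ∈ W.neighborSet w →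
        ∃ s, W.neighborSet c = {w, s} ∧ s ≠ w ∧ s ∈ W.verts ∧ G.Adj c s ∧ c ∈ W.verts \ {w}) := by
  obtain ⟨⟨hconn, hdeg⟩, hwI, hWI, hN2⟩ := hW
  have hwv : w ∈ W.verts := by
    have : w ∈ W.verts ∩ I := by rw [hWI]; exact rfl
    exact this.1
  have hsubC : W.verts \ {w} ⊆ C := by
    rintro z ⟨hzv, hzw⟩
    by_contra hzC
    have hzI : z ∈ I := by rw [hIc]; exact hzC
    have hzm : z ∈ W.verts ∩ I := ⟨hzv, hzI⟩
    rw [hWI] at hzm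
    exact hzw hzm
  have hnsub : W.neighborSet w ⊆ W.verts ∩ G.neighborSet w := fun y hy =>
    ⟨W.edge_vert (W.adj_symm hy), W.adj_sub hy⟩
  have hcard : (W.neighborSet w).ncard = 2 := hdeg w hwv
  have heqN : W.neighborSet w = W.verts ∩ G.neighborSet w := by
    apply Set.eq_of_subset_of_ncard_le hnsub _ (Set.toFinite _)
    rw [hN2, hcard]
  obtain ⟨a, b, hab, habN⟩ := Set.ncard_eq_two.mp hcard
  refine ⟨a, b, hab, habN, by rw [← heqN, habN], hwv, hsubC, ?_, ?_⟩
  · intro z hz hza hzb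
    have hzC : z ∈ C := hsubC hz
    have hWsub' : W.neighborSet z ⊆ W.verts \ {w} := by
      intro y hy
      have hyv : y ∈ W.verts := W.edge_vert (W.adj_symm hy)
      have hyw : y ≠ w := by
        intro hrfl
        have h' : W.Adj w z := by rw [← hrfl]; exact W.adj_symm hy
        have hzm : z ∈ W.neighborSet w := h'
        rw [habN] at hzm
        rcases hzm with h | h
        · exact hza h
        · exact hzb h
      exact ⟨hyv, hyw⟩
    have hWsub : W.neighborSet z ⊆ G.neighborSet z ∩ C := by
      intro y hy
      exact ⟨W.adj_sub hy, hsubC (hWsub' hy)⟩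
    have heq2 : W.neighborSet z = G.neighborSet z ∩ C := by
      apply Set.eq_of_subset_of_ncard_le hWsub _ (Set.toFinite _)
      rw [hcyc.2 z hzC, hdeg z hz.1]
    refine ⟨heq2, ?_⟩
    rw [← heq2]
    exact hWsub'
  · intro c hc
    have hcv : c ∈ W.verts := W.edge_vert (W.adj_symm hc)
    have hcw : c ≠ w := (W.adj_sub hc).ne'
    have hcard2 : (W.neighborSet c).ncard = 2 := hdeg c hcv
    have hwc : w ∈ W.neighborSet c := W.adj_symm hc
    obtain ⟨x1, y1, hxy, hNc⟩ := Set.ncard_eq_two.mp hcard2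
    rw [hNc] at hwc
    rcases hwc with rfl | rfl
    · refine ⟨y1, hNc, hxy.symm, ?_, ?_, ⟨hcv, hcw⟩⟩
      · have : y1 ∈ W.neighborSet c := by rw [hNc]; exact Or.inr rfl
        exact W.edge_vert (W.adj_symm this)
      · have : y1 ∈ W.neighborSet c := by rw [hNc]; exact Or.inr rfl
        exact W.adj_sub this
    · refine ⟨x1, by rw [hNc, Set.pair_comm], hxy, ?_, ?_, ⟨hcv, hcw⟩⟩
      · have : x1 ∈ W.neighborSet c := by rw [hNc]; exact Or.inl rfl
        exact W.edge_vert (W.adj_symm this)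
      · have : x1 ∈ W.neighborSet c := by rw [hNc]; exact Or.inl rfl
        exact W.adj_sub this

end SubgraphGlue
section Steps
variable {G : SimpleGraph V}

lemma step3 [Finite V] {Cs A B : Set V} {a b q1 q2 t1 x : V}
    (hdeg : ∀ z ∈ Cs, (G.neighborSet z ∩ Cs).ncard = 2)
    (hA : A ⊆ Cs) (hB : B ⊆ Cs)
    (hA1 : ∀ z ∈ A, z ≠ a → z ≠ b → G.neighborSet z ∩ Cs ⊆ A)
    (hB1 : ∀ z ∈ B, z ≠ q1 → z ≠ q2 → G.neighborSet z ∩ Cs ⊆ B)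
    (hconnA : ∀ x' y', x' ∈ A → y' ∈ A → WalkIn G A x' y')
    (haA : a ∈ A) (haB : a ∈ B) (hbB : b ∈ B)
    (hq1B : q1 ∈ B)
    (ht1 : G.Adj q1 t1) (ht1B : t1 ∈ B)
    (hx : x ∈ A) (hxB : x ∉ B) :
    q2 ∈ A := by
  by_contra hq2A
  have hq1Cs : q1 ∈ Cs := hB hq1B
  have hq1S : q1 ∉ A \ B := fun h => h.2 hq1B
  have hexit : ∀ z ∈ A \ B, ∀ y, G.Adj z y → y ∈ Cs → y ∉ A \ B → y = q1 := by
    intro z hz y hadj hyC hyS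
    have hza : z ≠ a := fun h => hz.2 (h ▸ haB)
    have hzb : z ≠ b := fun h => hz.2 (h ▸ hbB)
    have hyA : y ∈ A := hA1 z hz.1 hza hzb ⟨hadj, hyC⟩
    have hyB : y ∈ B := by
      by_contra hyB
      exact hyS ⟨hyA, hyB⟩
    by_contra hyq1
    have hyq2 : y ≠ q2 := fun h => hq2A (h ▸ hyA)
    exact hz.2 (hB1 y hyB hyq1 hyq2 ⟨hadj.symm, hA hz.1⟩)
  have heven : Even ((G.neighborSet q1 ∩ (A \ B)).ncard) :=
    engine1 (fun z hz => hA hz.1) hq1Cs hq1S (fun z hz => hdeg z (hA hz.1)) hexit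
  have hpos : 0 < (G.neighborSet q1 ∩ (A \ B)).ncard := by
    obtain ⟨p, hp⟩ := hconnA x a hx haA
    obtain ⟨z, z', hadj, hzA, hzB, hz'A, hz'B, -⟩ := walk_crossing p hp hxB haB
    have hz'q : z' = q1 := by
      by_contra hzq1
      have hz'q2 : z' ≠ q2 := fun h => hq2A (h ▸ hz'A)
      exact hzB (hB1 z' hz'B hzq1 hz'q2 ⟨hadj.symm, hA hzA⟩)
    rw [Set.ncard_pos (Set.toFinite _)]
    exact ⟨z, (hz'q ▸ hadj).symm, hzA, hzB⟩
  have hge2 : 2 ≤ (G.neighborSet q1 ∩ (A \ B)).ncard := by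
    obtain ⟨k, hk⟩ := heven; omega
  have heq : G.neighborSet q1 ∩ (A \ B) = G.neighborSet q1 ∩ Cs := by
    apply Set.eq_of_subset_of_ncard_le _ _ (Set.toFinite _)
    · exact Set.inter_subset_inter_right _ (fun z hz => hA hz.1)
    · rw [hdeg q1 hq1Cs]; exact hge2
  have ht1m : t1 ∈ G.neighborSet q1 ∩ Cs := ⟨ht1, hB ht1B⟩
  rw [← heq] at ht1m
  exact ht1m.2.2 ht1B

lemma step2 [Finite V] {Cs A B : Set V} {a b q1 q2 t1 x w : V}
    (hdeg : ∀ z ∈ Cs, (G.neighborSet z ∩ Cs).ncard = 2)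
    (hA : A ⊆ Cs) (hB : B ⊆ Cs)
    (hA1 : ∀ z ∈ A, z ≠ a → z ≠ b → G.neighborSet z ∩ Cs ⊆ A)
    (hB1 : ∀ z ∈ B, z ≠ q1 → z ≠ q2 → G.neighborSet z ∩ Cs ⊆ B)
    (hconnA : ∀ x' y', x' ∈ A → y' ∈ A → WalkIn G A x' y')
    (hconnC : ∀ x' y', x' ∈ Cs → y' ∈ Cs → WalkIn G Cs x' y')
    (haA : a ∈ A) (haB : a ∈ B) (hbB : b ∈ B)
    (hq1B : q1 ∈ B) (hq2B : q2 ∈ B) (hq12 : q1 ≠ q2)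
    (ht1 : G.Adj q1 t1) (ht1B : t1 ∈ B)
    (hx : x ∈ A) (hxB : x ∉ B)
    (hw : w ∈ Cs) (hwA : w ∉ A) (hwB : w ∉ B) : False := by
  classical
  set K : Set V := {z | WalkIn G (Cs \ (A ∪ B)) w z} with hKdef
  have hwD : w ∈ Cs \ (A ∪ B) := ⟨hw, fun h => by rcases h with h | h; exacts [hwA h, hwB h]⟩
  have hKD : K ⊆ Cs \ (A ∪ B) := fun z hz => hz.end_mem
  have hKCs : K ⊆ Cs := fun z hz => (hKD hz).1
  have hKA : ∀ z ∈ K, z ∉ A := fun z hz h => (hKD hz).2 (Or.inl h)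
  have hKB : ∀ z ∈ K, z ∉ B := fun z hz h => (hKD hz).2 (Or.inr h)
  have hq1K : q1 ∉ K := fun h => hKB q1 h hq1B
  have hq2K : q2 ∉ K := fun h => hKB q2 h hq2B
  have hexitK : ∀ z ∈ K, ∀ y, G.Adj z y → y ∈ Cs → y ∉ K → y = q1 ∨ y = q2 := by
    intro z hz y hadj hyC hyK
    by_cases hyB : y ∈ B
    · by_contra hcon
      push_neg at hcon
      exact hKB z hz (hB1 y hyB hcon.1 hcon.2 ⟨hadj.symm, hKCs hz⟩)
    · by_cases hyA : y ∈ A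
      · exfalso
        have hya : y ≠ a := fun h => hyB (h ▸ haB)
        have hyb : y ≠ b := fun h => hyB (h ▸ hbB)
        exact hKA z hz (hA1 y hyA hya hyb ⟨hadj.symm, hKCs hz⟩)
      · exfalso
        exact hyK (WalkIn.extend hz hadj ⟨hyC, fun h => by rcases h with h | h; exacts [hyA h, hyB h]⟩)
  have hexitS : ∀ z ∈ A \ B, ∀ y, G.Adj z y → y ∈ Cs → y ∉ A \ B → y = q1 ∨ y = q2 := by
    intro z hz y hadj hyC hyS
    have hza : z ≠ a := fun h => hz.2 (h ▸ haB)
    have hzb : z ≠ b := fun h => hz.2 (h ▸ hbB)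
    have hyA : y ∈ A := hA1 z hz.1 hza hzb ⟨hadj, hyC⟩
    have hyB : y ∈ B := by
      by_contra hyB
      exact hyS ⟨hyA, hyB⟩
    by_contra hcon
    push_neg at hcon
    exact hz.2 (hB1 y hyB hcon.1 hcon.2 ⟨hadj.symm, hA hz.1⟩)
  have hq1S : q1 ∉ A \ B := fun h => h.2 hq1B
  have hq2S : q2 ∉ A \ B := fun h => h.2 hq2B
  have hevenK : Even ((G.neighborSet q1 ∩ K).ncard + (G.neighborSet q2 ∩ K).ncard) :=
    engine2 hq12 hKCs (hB hq1B) (hB hq2B) hq1K hq2K (fun z hz => hdeg z (hKCs hz)) hexitK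
  have hevenS : Even ((G.neighborSet q1 ∩ (A \ B)).ncard + (G.neighborSet q2 ∩ (A \ B)).ncard) :=
    engine2 hq12 (fun z hz => hA hz.1) (hB hq1B) (hB hq2B) hq1S hq2S
      (fun z hz => hdeg z (hA hz.1)) hexitS
  -- at least one exit from K
  have hposK : 1 ≤ (G.neighborSet q1 ∩ K).ncard + (G.neighborSet q2 ∩ K).ncard := by
    obtain ⟨p, hp⟩ := hconnC w q1 hw (hB hq1B)
    have hwAB : w ∉ A ∪ B := fun h => by rcases h with h | h; exacts [hwA h, hwB h]
    obtain ⟨z0, y0, hadj0, hz0Cs, hz0T, hy0Cs, hy0T, hwalk0⟩ :=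
      walk_crossing (T := A ∪ B) p hp hwAB (Or.inr hq1B)
    have hz0K : z0 ∈ K := hwalk0
    have hy0K : y0 ∉ K := fun h => (hKD h).2 hy0T
    rcases hexitK z0 hz0K y0 hadj0 hy0Cs hy0K with rfl | rfl
    · have : 0 < (G.neighborSet y0 ∩ K).ncard := by
        rw [Set.ncard_pos (Set.toFinite _)]
        exact ⟨z0, hadj0.symm, hz0K⟩
      omega
    · have : 0 < (G.neighborSet y0 ∩ K).ncard := by
        rw [Set.ncard_pos (Set.toFinite _)]
        exact ⟨z0, hadj0.symm, hz0K⟩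
      omega
  -- at least one exit from A \ B
  have hposS : 1 ≤ (G.neighborSet q1 ∩ (A \ B)).ncard + (G.neighborSet q2 ∩ (A \ B)).ncard := by
    obtain ⟨p, hp⟩ := hconnA x a hx haA
    obtain ⟨z1, y1, hadj1, hz1A, hz1B, hy1A, hy1B, -⟩ := walk_crossing p hp hxB haB
    have hz1S : z1 ∈ A \ B := ⟨hz1A, hz1B⟩
    have hy1S : y1 ∉ A \ B := fun h => h.2 hy1B
    rcases hexitS z1 hz1S y1 hadj1 (hA hy1A) hy1S with rfl | rfl
    · have : 0 < (G.neighborSet y1 ∩ (A \ B)).ncard := by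
        rw [Set.ncard_pos (Set.toFinite _)]
        exact ⟨z1, hadj1.symm, hz1S⟩
      omega
    · have : 0 < (G.neighborSet y1 ∩ (A \ B)).ncard := by
        rw [Set.ncard_pos (Set.toFinite _)]
        exact ⟨z1, hadj1.symm, hz1S⟩
      omega
  -- capacity bounds
  have hdisj : Disjoint K (A \ B) := by
    rw [Set.disjoint_left]
    intro z hz h
    exact hKA z hz h.1
  have hcap : ∀ y, y ∈ Cs →
      (G.neighborSet y ∩ K).ncard + (G.neighborSet y ∩ (A \ B)).ncard ≤ 2 ∧
      ((G.neighborSet y ∩ K).ncard + (G.neighborSet y ∩ (A \ B)).ncard = 2 →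
        G.neighborSet y ∩ Cs ⊆ K ∪ (A \ B)) := by
    intro y hy
    have hdisj2 : Disjoint (G.neighborSet y ∩ K) (G.neighborSet y ∩ (A \ B)) :=
      Set.disjoint_of_subset Set.inter_subset_right Set.inter_subset_right hdisj
    have hun : (G.neighborSet y ∩ K) ∪ (G.neighborSet y ∩ (A \ B))
        = G.neighborSet y ∩ (K ∪ (A \ B)) := (Set.inter_union_distrib_left _ _ _).symm
    have hcardun : ((G.neighborSet y ∩ (K ∪ (A \ B)))).ncard
        = (G.neighborSet y ∩ K).ncard + (G.neighborSet y ∩ (A \ B)).ncard := by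
      rw [← hun, Set.ncard_union_eq hdisj2 (Set.toFinite _) (Set.toFinite _)]
    have hsub : G.neighborSet y ∩ (K ∪ (A \ B)) ⊆ G.neighborSet y ∩ Cs := by
      apply Set.inter_subset_inter_right
      intro z hz
      rcases hz with hz | hz
      · exact hKCs hz
      · exact hA hz.1
    constructor
    · rw [← hcardun, ← hdeg y hy]
      exact Set.ncard_le_ncard hsub (Set.toFinite _)
    · intro h2
      have : G.neighborSet y ∩ (K ∪ (A \ B)) = G.neighborSet y ∩ Cs := by
        apply Set.eq_of_subset_of_ncard_le hsub _ (Set.toFinite _)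
        rw [hdeg y hy, hcardun, h2]
      intro z hz
      have : z ∈ G.neighborSet y ∩ (K ∪ (A \ B)) := by rw [this]; exact hz
      exact this.2
  obtain ⟨hcap1, heq1⟩ := hcap q1 (hB hq1B)
  obtain ⟨hcap2, -⟩ := hcap q2 (hB hq2B)
  have h2 : (G.neighborSet q1 ∩ K).ncard + (G.neighborSet q1 ∩ (A \ B)).ncard = 2 := by
    obtain ⟨k1, hk1⟩ := hevenK
    obtain ⟨k2, hk2⟩ := hevenS
    omega
  have ht1m : t1 ∈ G.neighborSet q1 ∩ Cs := ⟨ht1, hB ht1B⟩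
  rcases heq1 h2 ht1m with h | h
  · exact hKB t1 h ht1B
  · exact h.2 ht1B

end Steps

/-- if `u` attaches to `σ v`, then exactly one of the following
holds: `σ u` improves `σ v`, or `v` attaches to `σ u`. -/
theorem attach_pair_or_improve [Finite V] (G : SimpleGraph V) (C I : Set V)
    (hcob : IsCobweb G C I) (σ : V → G.Subgraph)
    (hσ : ∀ v ∈ I, IsWedge G C I (σ v) v)
    (u v : V) (hu : u ∈ I) (hv : v ∈ I) (huv : u ≠ v)
    (hatt : Attaches G u (σ v)) :
    Xor' (Improves G (σ u) u (σ v) v) (Attaches G v (σ u)) := by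
  classical
  obtain ⟨hcyc, hIc, -, hind, -, hnsub⟩ := hcob
  have hwu := hσ u hu
  have hwv := hσ v hv
  obtain ⟨a, b, hab, haNb, haN2, huWu, hAsubC, hintU, hendU⟩ := wedge_facts hcyc hIc hwu
  obtain ⟨q1, q2, hq12, hqNb, hqN2, hvWv, hBsubC, hintV, hendV⟩ := wedge_facts hcyc hIc hwv
  set A : Set V := (σ u).verts \ {u} with hAdef
  set B : Set V := (σ v).verts \ {v} with hBdef
  have hvC : v ∉ C := by
    intro h
    rw [hIc] at hv
    exact hv h
  have huC : u ∉ C := by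
    intro h
    rw [hIc] at hu
    exact hu h
  have hNu_sub : G.neighborSet u ⊆ B := by
    intro z hz
    have hzWv : z ∈ (σ v).verts := hatt.2 hz
    have hzv : z ≠ v := fun h => hind u hu v hv (h ▸ hz)
    exact ⟨hzWv, hzv⟩
  have hNv_subC : G.neighborSet v ⊆ C := by
    intro z hz
    by_contra hzC
    have hzI : z ∈ I := by rw [hIc]; exact hzC
    exact hind v hv z hzI hz
  obtain ⟨sa, hsaNb, hsau, hsaWu, hasa, haAm⟩ :=
    hendU a (by rw [haNb]; exact Set.mem_insert _ _)
  obtain ⟨sb, hsbNb, hsbu, hsbWu, hbsb, hbAm⟩ :=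
    hendU b (by rw [haNb]; exact Set.mem_insert_of_mem _ rfl)
  obtain ⟨t1, ht1Nb, ht1v, ht1Wv, hq1t1, hq1Bm⟩ :=
    hendV q1 (by rw [hqNb]; exact Set.mem_insert _ _)
  obtain ⟨t2, ht2Nb, ht2v, ht2Wv, hq2t2, hq2Bm⟩ :=
    hendV q2 (by rw [hqNb]; exact Set.mem_insert_of_mem _ rfl)
  have ht1B : t1 ∈ B := ⟨ht1Wv, ht1v⟩
  have ht2B : t2 ∈ B := ⟨ht2Wv, ht2v⟩
  have haNu : G.Adj u a := by
    have : a ∈ (σ u).verts ∩ G.neighborSet u := by rw [haN2]; exact Set.mem_insert _ _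
    exact this.2
  have hbNu : G.Adj u b := by
    have : b ∈ (σ u).verts ∩ G.neighborSet u := by
      rw [haN2]; exact Set.mem_insert_of_mem _ rfl
    exact this.2
  have hq1Nv : G.Adj v q1 := by
    have : q1 ∈ (σ v).verts ∩ G.neighborSet v := by rw [hqN2]; exact Set.mem_insert _ _
    exact this.2
  have hq2Nv : G.Adj v q2 := by
    have : q2 ∈ (σ v).verts ∩ G.neighborSet v := by
      rw [hqN2]; exact Set.mem_insert_of_mem _ rfl
    exact this.2
  have haB : a ∈ B := hNu_sub haNu
  have hbB : b ∈ B := hNu_sub hbNu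
  have hA1 : ∀ z ∈ A, z ≠ a → z ≠ b → G.neighborSet z ∩ C ⊆ A :=
    fun z hz hza hzb => by rw [← (hintU z hz hza hzb).1] at *; exact (by
      rw [(hintU z hz hza hzb).1]; exact (hintU z hz hza hzb).2)
  have hB1 : ∀ z ∈ B, z ≠ q1 → z ≠ q2 → G.neighborSet z ∩ C ⊆ B :=
    fun z hz hz1 hz2 => (hintV z hz hz1 hz2).2
  have hdegC : ∀ z ∈ C, (G.neighborSet z ∩ C).ncard = 2 := hcyc.2
  have hconnA : ∀ x' y', x' ∈ A → y' ∈ A → WalkIn G A x' y' :=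
    fun x' y' hx' hy' => cycleSubgraph_del_conn hwu.1 huWu hx'.1 hx'.2 hy'.1 hy'.2
  have hconnC : ∀ x' y', x' ∈ C → y' ∈ C → WalkIn G C x' y' :=
    fun x' y' hx' hy' => induce_conn hcyc.1 hx' hy'
  have hvWu : v ∉ (σ u).verts := by
    intro h
    have hm : v ∈ (σ u).verts ∩ I := ⟨h, hv⟩
    rw [hwu.2.2.1] at hm
    exact huv hm.symm
  have huNv : u ∉ G.neighborSet v := fun h => hind v hv u hu h
  have hQnb : ∀ z : V, z ∈ C →
      ((σ v).deleteVerts {v}).neighborSet z = (σ v).neighborSet z \ {v} :=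
    fun z hz => delete_nbrs _ _ _ (fun h => hvC (h ▸ hz))
  have hPnb : ∀ z : V, z ∈ C →
      ((σ u).deleteVerts {u}).neighborSet z = (σ u).neighborSet z \ {u} :=
    fun z hz => delete_nbrs _ _ _ (fun h => huC (h ▸ hz))
  -- the exclusion argument: Improves and Attaches cannot both hold
  have hexcl : (σ u).deleteVerts {u} ≤ (σ v).deleteVerts {v} → Attaches G v (σ u) → False := by
    intro hle hatt'
    have hNvA : G.neighborSet v ⊆ A := by
      intro z hz
      exact ⟨hatt'.2 hz, fun h => huNv (h ▸ hz)⟩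
    have hAB : A ⊆ B := by
      intro z hz
      have hz' : z ∈ ((σ u).deleteVerts {u}).verts := by
        rw [Subgraph.deleteVerts_verts]; exact hz
      have := hle.1 hz'
      rw [Subgraph.deleteVerts_verts] at this
      exact this
    have hNvq : G.neighborSet v = {q1, q2} := by
      rw [← hqN2]
      exact (Set.inter_eq_self_of_subset_right
        (fun z hz => (hAB (hNvA hz)).1)).symm
    have hkey : ∀ q t, ((σ v).neighborSet q = {v, t}) → t ≠ v → q ∈ A → q = a ∨ q = b := by
      intro q t hNq htv hqA
      by_contra hcon
      push_neg at hcon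
      have hqC : q ∈ C := hAsubC hqA
      have huq : u ∉ (σ u).neighborSet q := by
        intro h
        have : q ∈ (σ u).neighborSet u := (σ u).adj_symm h
        rw [haNb] at this
        rcases this with h' | h'
        · exact hcon.1 h'
        · exact hcon.2 h'
      have hPq : ((σ u).deleteVerts {u}).neighborSet q = (σ u).neighborSet q := by
        rw [hPnb q hqC]
        exact Set.diff_singleton_eq_self huq
      have hcard2 : (((σ u).deleteVerts {u}).neighborSet q).ncard = 2 := by
        rw [hPq]; exact hwu.1.2 q hqA.1
      have hQq : ((σ v).deleteVerts {v}).neighborSet q = {t} := by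
        rw [hQnb q hqC, hNq]
        ext y
        simp only [Set.mem_diff, Set.mem_insert_iff, Set.mem_singleton_iff]
        constructor
        · rintro ⟨h1 | h1, h2⟩
          · exact absurd h1 h2
          · exact h1
        · rintro rfl
          exact ⟨Or.inr rfl, htv⟩
      have hsub : ((σ u).deleteVerts {u}).neighborSet q ⊆
          ((σ v).deleteVerts {v}).neighborSet q := fun y hy => hle.2 hy
      have : (2 : ℕ) ≤ 1 := by
        rw [← hcard2]
        calc (((σ u).deleteVerts {u}).neighborSet q).ncard
            ≤ (((σ v).deleteVerts {v}).neighborSet q).ncard :=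
              Set.ncard_le_ncard hsub (Set.toFinite _)
          _ = 1 := by rw [hQq, Set.ncard_singleton]
      omega
    have hq1ab := hkey q1 t1 ht1Nb ht1v (hNvA hq1Nv)
    have hq2ab := hkey q2 t2 ht2Nb ht2v (hNvA hq2Nv)
    have hNvNu : G.neighborSet v ⊆ G.neighborSet u := by
      rw [hNvq]
      rintro z (rfl | rfl)
      · rcases hq1ab with rfl | rfl
        · exact haNu
        · exact hbNu
      · rcases hq2ab with rfl | rfl
        · exact haNu
        · exact hbNu
    exact hnsub v hv u hu (Ne.symm huv) hNvNu
  by_cases hle : (σ u).deleteVerts {u} ≤ (σ v).deleteVerts {v}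
  · -- σ u improves σ v
    have hne : (σ u).deleteVerts {u} ≠ (σ v).deleteVerts {v} := by
      intro heq
      have hAB : A = B := by
        have := congrArg Subgraph.verts heq
        rw [Subgraph.deleteVerts_verts, Subgraph.deleteVerts_verts] at this
        exact this
      have hNuA : G.neighborSet u ⊆ A := by rw [hAB]; exact hNu_sub
      have hNueq : G.neighborSet u = {a, b} := by
        rw [← haN2]
        exact (Set.inter_eq_self_of_subset_right (fun z hz => (hNuA hz).1)).symm
      have hkey : ∀ c s, ((σ u).neighborSet c = {u, s}) → s ≠ u → c ∈ A → c = q1 ∨ c = q2 := by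
        intro c s hNc hsu hcA
        by_contra hcon
        push_neg at hcon
        have hcC : c ∈ C := hAsubC hcA
        have hcB : c ∈ B := hAB ▸ hcA
        have hvq : v ∉ (σ v).neighborSet c := by
          intro h
          have : c ∈ (σ v).neighborSet v := (σ v).adj_symm h
          rw [hqNb] at this
          rcases this with h' | h'
          · exact hcon.1 h'
          · exact hcon.2 h'
        have hQc : ((σ v).deleteVerts {v}).neighborSet c = (σ v).neighborSet c := by
          rw [hQnb c hcC]
          exact Set.diff_singleton_eq_self hvq
        have hcard2 : (((σ v).deleteVerts {v}).neighborSet c).ncard = 2 := by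
          rw [hQc]; exact hwv.1.2 c hcB.1
        have hPc : ((σ u).deleteVerts {u}).neighborSet c = {s} := by
          rw [hPnb c hcC, hNc]
          ext y
          simp only [Set.mem_diff, Set.mem_insert_iff, Set.mem_singleton_iff]
          constructor
          · rintro ⟨h1 | h1, h2⟩
            · exact absurd h1 h2
            · exact h1
          · rintro rfl
            exact ⟨Or.inr rfl, hsu⟩
        have hone : (((σ v).deleteVerts {v}).neighborSet c).ncard = 1 := by
          rw [← heq, hPc, Set.ncard_singleton]
        rw [hcard2] at hone
        norm_num at hone
      have haq := hkey a sa hsaNb hsau haAm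
      have hbq := hkey b sb hsbNb hsbu hbAm
      have : G.neighborSet u ⊆ G.neighborSet v := by
        rw [hNueq]
        rintro z (rfl | rfl)
        · rcases haq with rfl | rfl
          · exact hq1Nv
          · exact hq2Nv
        · rcases hbq with rfl | rfl
          · exact hq1Nv
          · exact hq2Nv
      exact hnsub u hu v hv huv this
    exact Or.inl ⟨⟨hle, hne⟩, fun hatt' => hexcl hle hatt'⟩
  · -- v attaches to σ u
    have hattach : Attaches G v (σ u) := by
      refine ⟨hvWu, ?_⟩
      by_cases hAB : A ⊆ B
      · -- vertex sets are nested, so an edge must fail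
        have hedge : ∃ z z', ((σ u).deleteVerts {u}).Adj z z' ∧
            ¬ ((σ v).deleteVerts {v}).Adj z z' := by
          by_contra hno
          push_neg at hno
          refine hle ⟨?_, fun z z' h => hno z z' h⟩
          rw [Subgraph.deleteVerts_verts, Subgraph.deleteVerts_verts]
          exact hAB
        obtain ⟨z, z', hPzz, hQzz⟩ := hedge
        rw [Subgraph.deleteVerts_adj] at hPzz
        obtain ⟨hzW, hzu', hz'W, hz'u', hWuzz⟩ := hPzz
        have hzu : z ≠ u := fun h => hzu' (by rw [h]; rfl)
        have hz'u : z' ≠ u := fun h => hz'u' (by rw [h]; rfl)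
        have hzA : z ∈ A := ⟨hzW, hzu⟩
        have hz'A : z' ∈ A := ⟨hz'W, hz'u⟩
        have hzB : z ∈ B := hAB hzA
        have hz'B : z' ∈ B := hAB hz'A
        have hzC : z ∈ C := hAsubC hzA
        have hz'C : z' ∈ C := hAsubC hz'A
        have hzv : z ≠ v := fun h => hvC (h ▸ hzC)
        have hz'v : z' ≠ v := fun h => hvC (h ▸ hz'C)
        have hGzz : G.Adj z z' := (σ u).adj_sub hWuzz
        have hnotWv : ¬ (σ v).Adj z z' := by
          intro h
          apply hQzz
          rw [Subgraph.deleteVerts_adj]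
          exact ⟨(σ v).edge_vert h, by simp [hzv], (σ v).edge_vert ((σ v).adj_symm h),
            by simp [hz'v], h⟩
        have hzq : z = q1 ∨ z = q2 := by
          by_contra hcon
          push_neg at hcon
          have := (hintV z hzB hcon.1 hcon.2).1
          have hz'mem : z' ∈ (σ v).neighborSet z := by
            rw [this]; exact ⟨hGzz, hz'C⟩
          exact hnotWv hz'mem
        have hz'q : z' = q1 ∨ z' = q2 := by
          by_contra hcon
          push_neg at hcon
          have := (hintV z' hz'B hcon.1 hcon.2).1
          have hzmem : z ∈ (σ v).neighborSet z' := by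
            rw [this]; exact ⟨hGzz.symm, hzC⟩
          exact hnotWv ((σ v).adj_symm hzmem)
        have hzz' : z ≠ z' := hGzz.ne
        -- normalize: q1 and q2 are adjacent in G, not in σ v, and both in A
        have hmain : G.Adj q1 q2 ∧ ¬ (σ v).Adj q1 q2 ∧ q1 ∈ A ∧ q2 ∈ A := by
          rcases hzq with rfl | rfl <;> rcases hz'q with rfl | rfl
          · exact absurd rfl hzz'
          · exact ⟨hGzz, hnotWv, hzA, hz'A⟩
          · exact ⟨hGzz.symm, fun h => hnotWv ((σ v).adj_symm h), hz'A, hzA⟩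
          · exact absurd rfl hzz'
        obtain ⟨hadj12, hnadj12, hq1A, hq2A⟩ := hmain
        have ht1q2 : t1 ≠ q2 := by
          rintro rfl
          apply hnadj12
          have : t1 ∈ (σ v).neighborSet q1 := by
            rw [ht1Nb]; exact Set.mem_insert_of_mem _ rfl
          exact this
        have ht2q1 : t2 ≠ q1 := by
          rintro rfl
          apply hnadj12
          have : t2 ∈ (σ v).neighborSet q2 := by
            rw [ht2Nb]; exact Set.mem_insert_of_mem _ rfl
          exact (σ v).adj_symm this
        have hNCq1 : G.neighborSet q1 ∩ C = {t1, q2} := by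
          symm
          apply Set.eq_of_subset_of_ncard_le
          · rintro y (rfl | rfl)
            · exact ⟨hq1t1, hBsubC ht1B⟩
            · exact ⟨hadj12, hBsubC hq2Bm⟩
          · rw [hdegC q1 (hBsubC hq1Bm), Set.ncard_pair ht1q2]
          · exact Set.toFinite _
        have hNCq2 : G.neighborSet q2 ∩ C = {t2, q1} := by
          symm
          apply Set.eq_of_subset_of_ncard_le
          · rintro y (rfl | rfl)
            · exact ⟨hq2t2, hBsubC ht2B⟩
            · exact ⟨hadj12.symm, hBsubC hq1Bm⟩
          · rw [hdegC q2 (hBsubC hq2Bm), Set.ncard_pair ht2q1]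
          · exact Set.toFinite _
        have hCB : C ⊆ B := by
          intro w0 hw0
          by_contra hw0B
          obtain ⟨p, hp⟩ := hconnC w0 q1 hw0 (hBsubC hq1Bm)
          obtain ⟨z0, y0, hadj0, hz0C, hz0B, hy0C, hy0B, -⟩ :=
            walk_crossing (T := B) p hp hw0B hq1Bm
          have hy0q : y0 = q1 ∨ y0 = q2 := by
            by_contra hcon
            push_neg at hcon
            exact hz0B (hB1 y0 hy0B hcon.1 hcon.2 ⟨hadj0.symm, hz0C⟩)
          rcases hy0q with rfl | rfl
          · have : z0 ∈ G.neighborSet y0 ∩ C := ⟨hadj0.symm, hz0C⟩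
            rw [hNCq1] at this
            rcases this with rfl | rfl
            · exact hz0B ht1B
            · exact hz0B hq2Bm
          · have : z0 ∈ G.neighborSet y0 ∩ C := ⟨hadj0.symm, hz0C⟩
            rw [hNCq2] at this
            rcases this with rfl | rfl
            · exact hz0B ht2B
            · exact hz0B hq1Bm
        intro zz hzz
        have hzzC : zz ∈ C := hNv_subC hzz
        have hzzB : zz ∈ B := hCB hzzC
        have hm : zz ∈ (σ v).verts ∩ G.neighborSet v := ⟨hzzB.1, hzz⟩
        rw [hqN2] at hm
        rcases hm with rfl | rfl
        · exact hq1A.1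
        · exact hq2A.1
      · -- main topological case
        obtain ⟨x, hxA, hxB⟩ := Set.not_subset.mp hAB
        have hq2A : q2 ∈ A :=
          step3 hdegC hAsubC hBsubC hA1 hB1 hconnA haAm haB hbB hq1Bm hq1t1 ht1B hxA hxB
        have hq1A : q1 ∈ A := by
          refine step3 (q1 := q2) (q2 := q1) hdegC hAsubC hBsubC hA1
            (fun z hz h2 h1 => hB1 z hz h1 h2) hconnA haAm haB hbB hq2Bm hq2t2 ht2B hxA hxB
        have hCBA : ∀ w0, w0 ∈ C → w0 ∉ B → w0 ∈ A := by
          intro w0 hw0 hw0B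
          by_contra hw0A
          exact step2 hdegC hAsubC hBsubC hA1 hB1 hconnA hconnC haAm haB hbB hq1Bm hq2Bm
            hq12 hq1t1 ht1B hxA hxB hw0 hw0A hw0B
        intro zz hzz
        have hzzC : zz ∈ C := hNv_subC hzz
        by_cases hzzB : zz ∈ B
        · have hm : zz ∈ (σ v).verts ∩ G.neighborSet v := ⟨hzzB.1, hzz⟩
          rw [hqN2] at hm
          rcases hm with rfl | rfl
          · exact hq1A.1
          · exact hq2A.1
        · exact (hCBA zz hzzC hzzB).1
    exact Or.inr ⟨hattach, fun himp => hle himp.1⟩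
end

section
/- Let G be a cobweb with presentation (C, I) and σ a wedge-selection for (G, C, I). Then for all u, v ∈ I, the intersection graph σ(u) ∩ σ(v) has at most two connected components; moreover it has exactly two components if and only if u attaches to σ(v) and v attaches to σ(u). -/
open SimpleGraph

variable {V : Type}

namespace CobwebAux
open SimpleGraph
open scoped Classical

section ZModHelpers
variable {n : ℕ} [NeZero n]



lemma cast_val_eq (a : ZMod n) : ((a.val : ℕ) : ZMod n) = a := ZMod.natCast_rightInverse a

lemma val_add_val_neg {a b : ZMod n} (h : a ≠ b) : (a - b).val + (b - a).val = n := by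
  have h1 : a - b ≠ 0 := sub_ne_zero.mpr h
  have : NeZero (a - b) := ⟨h1⟩
  have : (b - a) = -(a - b) := by ring
  rw [this, ZMod.val_neg_of_ne_zero]
  have := ZMod.val_lt (a - b)
  have h2 : (a-b).val ≠ 0 := fun hh => h1 ((ZMod.val_eq_zero _).mp hh)
  omega

lemma sub_eq_cast_sub {a b c : ZMod n} {s t : ℕ} (ha : a - c = (s : ZMod n)) (hb : b - c = (t : ZMod n))
    (hts : t ≤ s) : a - b = ((s - t : ℕ) : ZMod n) := by
  have : a - b = (a - c) - (b - c) := by ring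
  rw [this, ha, hb, ← Nat.cast_sub hts]

/-- decompose: every x equals base + val of difference -/
lemma eq_add_cast_val (x a : ZMod n) : x = a + ((x - a).val : ZMod n) := by
  rw [cast_val_eq]; ring

lemma val_sub_add_one {x a : ZMod n} (hne : x + 1 ≠ a) : (x + 1 - a).val = (x - a).val + 1 := by
  have h1 : x + 1 - a = (x - a) + 1 := by ring
  have h2 : ((x - a).val + 1 : ℕ) = ((x - a) + 1 : ZMod n) := by
    push_cast [cast_val_eq]; ring
  have hlt : (x - a).val + 1 ≤ n := (ZMod.val_lt (x - a))
  rcases Nat.lt_or_ge ((x-a).val + 1) n with h | h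
  · rw [h1, ← h2, ZMod.val_cast_of_lt h]
  · exfalso
    have hn1 : (x - a).val + 1 = n := by omega
    apply hne
    have h3 : x + 1 - a = ((n : ℕ) : ZMod n) := by rw [h1, ← h2, hn1]
    rw [ZMod.natCast_self] at h3
    exact sub_eq_zero.mp h3


end ZModHelpers


variable {V : Type}

open Classical in
noncomputable def nextV (G : SimpleGraph V) (C : Set V) (x y : V) : V :=
  if h : ∃ z, z ≠ x ∧ G.neighborSet y ∩ C = {x, z} then h.choose else x

lemma nextV_spec {G : SimpleGraph V} {C : Set V} {x y : V}
    (h2 : (G.neighborSet y ∩ C).ncard = 2) (hx : x ∈ G.neighborSet y ∩ C) :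
    nextV G C x y ≠ x ∧ G.neighborSet y ∩ C = {x, nextV G C x y} := by
  have h : ∃ z, z ≠ x ∧ G.neighborSet y ∩ C = {x, z} := by
    obtain ⟨a, b, hab, habs⟩ := Set.ncard_eq_two.mp h2
    rw [habs] at hx ⊢
    rcases Set.mem_insert_iff.mp hx with rfl | hx2
    · exact ⟨b, hab.symm, rfl⟩
    · rw [Set.mem_singleton_iff.mp hx2]
      exact ⟨a, hab, Set.pair_comm a b⟩
  rw [nextV, dif_pos h]
  exact ⟨h.choose_spec.1, h.choose_spec.2⟩

noncomputable def seq (G : SimpleGraph V) (C : Set V) (x₀ x₁ : V) : ℕ → V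
  | 0 => x₀
  | 1 => x₁
  | (k+2) => nextV G C (seq G C x₀ x₁ k) (seq G C x₀ x₁ (k+1))

section SeqLemmas

variable {G : SimpleGraph V} {C : Set V} {x₀ x₁ : V}
  (hC : ∀ x ∈ C, (G.neighborSet x ∩ C).ncard = 2)
  (hx₀ : x₀ ∈ C) (hx₁ : x₁ ∈ C) (hadj : G.Adj x₀ x₁)

local notation "f" => seq G C x₀ x₁

include hC hx₀ hx₁ hadj

lemma seq_inv : ∀ k, f k ∈ C ∧ f (k+1) ∈ C ∧ G.Adj (f k) (f (k+1)) := by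
  intro k
  induction k with
  | zero => exact ⟨hx₀, hx₁, hadj⟩
  | succ k ih =>
    obtain ⟨h1, h2, h3⟩ := ih
    have hx : f k ∈ G.neighborSet (f (k+1)) ∩ C := ⟨h3.symm, h1⟩
    obtain ⟨hne, hset⟩ := nextV_spec (hC _ h2) hx
    have hmem : f (k+2) ∈ G.neighborSet (f (k+1)) ∩ C := by
      show nextV G C (f k) (f (k+1)) ∈ _
      rw [hset]; exact Set.mem_insert_iff.mpr (Or.inr rfl)
    exact ⟨h2, hmem.2, hmem.1⟩

lemma seq_nbrs : ∀ k, G.neighborSet (f (k+1)) ∩ C = {f k, f (k+2)} ∧ f (k+2) ≠ f k := by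
  intro k
  obtain ⟨h1, h2, h3⟩ := seq_inv hC hx₀ hx₁ hadj k
  have hx : f k ∈ G.neighborSet (f (k+1)) ∩ C := ⟨h3.symm, h1⟩
  obtain ⟨hne, hset⟩ := nextV_spec (hC _ h2) hx
  exact ⟨hset, hne⟩

lemma exists_period [Finite V] :
    ∃ p, 3 ≤ p ∧ f p = f 0 ∧ f (p+1) = f 1 ∧ (∀ a b, a < b → b < p → f a ≠ f b) := by
  classical
  have hQ : ∃ l, 0 < l ∧ ∃ k, k < l ∧ f k = f l := by
    obtain ⟨a, b, hne, he⟩ := Finite.exists_ne_map_eq_of_infinite f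
    rcases Nat.lt_or_ge a b with h | h
    · exact ⟨b, by omega, a, h, he⟩
    · exact ⟨a, by omega, b, by omega, he.symm⟩
  set p := Nat.find hQ with hpdef
  obtain ⟨hp0, k, hk, hkp⟩ : 0 < p ∧ ∃ k, k < p ∧ f k = f p := Nat.find_spec hQ
  have hinj : ∀ a b, a < b → b < p → f a ≠ f b := by
    intro a b hab hbp heq
    exact (Nat.find_min hQ hbp) ⟨by omega, a, hab, heq⟩
  have hk0 : k = 0 := by
    by_contra hk0
    have h1 : k + 1 ≠ p := by
      intro h
      have hA : G.Adj (f k) (f (k+1)) := (seq_inv hC hx₀ hx₁ hadj k).2.2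
      rw [h, ← hkp] at hA
      exact G.irrefl hA
    have h2 : k + 2 ≠ p := by
      intro h
      have hne := (seq_nbrs hC hx₀ hx₁ hadj k).2
      rw [h] at hne
      exact hne hkp.symm
    have hklt : k + 2 < p := by omega
    obtain ⟨k', rfl⟩ : ∃ k', k = k' + 1 := ⟨k-1, by omega⟩
    obtain ⟨p', hp'⟩ : ∃ p', p = p' + 1 := ⟨p-1, by omega⟩
    have hnb1 := (seq_nbrs hC hx₀ hx₁ hadj k').1
    have hnb2 := (seq_nbrs hC hx₀ hx₁ hadj p').1
    have hmem : f p' ∈ G.neighborSet (f (p'+1)) ∩ C := by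
      rw [hnb2]; exact Set.mem_insert _ _
    rw [← hp', ← hkp, hnb1] at hmem
    rcases Set.mem_insert_iff.mp hmem with he | he
    · exact hinj k' p' (by omega) (by omega) he.symm
    · exact hinj (k'+2) p' (by omega) (by omega) (Set.mem_singleton_iff.mp he).symm
  rw [hk0] at hkp
  have hp3 : 3 ≤ p := by
    rcases Nat.lt_or_ge p 3 with h | h
    · exfalso
      interval_cases p
      · have hA : G.Adj (f 0) (f 1) := hadj
        rw [← hkp] at hA
        exact G.irrefl hA
      · exact (seq_nbrs hC hx₀ hx₁ hadj 0).2 hkp.symm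
    · exact h
  refine ⟨p, hp3, hkp.symm, ?_, hinj⟩
  obtain ⟨p', hp'⟩ : ∃ p', p = p' + 1 := ⟨p-1, by omega⟩
  have hnb2 := (seq_nbrs hC hx₀ hx₁ hadj p').1
  have hmem : f 1 ∈ G.neighborSet (f (p'+1)) ∩ C := by
    rw [← hp', ← hkp]
    exact ⟨(hadj : G.Adj (f 0) (f 1)), hx₁⟩
  rw [hnb2] at hmem
  rcases Set.mem_insert_iff.mp hmem with he | he
  · exact absurd he (hinj 1 p' (by omega) (by omega))
  · rw [hp']; exact (Set.mem_singleton_iff.mp he).symm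

omit hC hx₀ hx₁ hadj in
lemma seq_period {p : ℕ} (h0 : f p = f 0) (h1 : f (p+1) = f 1) :
    ∀ k, f (k+p) = f k := by
  have key : ∀ k, f (k+p) = f k ∧ f (k+1+p) = f (k+1) := by
    intro k
    induction k with
    | zero => exact ⟨by simpa using h0, by simpa [Nat.add_comm] using h1⟩
    | succ k ih =>
      refine ⟨ih.2, ?_⟩
      have e1 : k + 1 + 1 + p = (k + p) + 2 := by omega
      have e2 : k + 1 + 1 = k + 2 := by omega
      rw [e1, e2]
      show nextV G C (f (k+p)) (f (k+p+1)) = nextV G C (f k) (f (k+1))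
      have e3 : k + p + 1 = k + 1 + p := by omega
      rw [ih.1, e3, ih.2]
  exact fun k => (key k).1

omit hC hx₀ hx₁ hadj in
lemma seq_mod {p : ℕ} (h0 : f p = f 0) (h1 : f (p+1) = f 1) :
    ∀ k, f (k % p) = f k := by
  intro k
  conv_rhs => rw [← Nat.mod_add_div k p]
  generalize k / p = q
  induction q with
  | zero => simp
  | succ q ih =>
    have e : k % p + p * (q+1) = (k % p + p * q) + p := by ring
    rw [e, seq_period h0 h1, ih]

end SeqLemmas

structure CycleCoords (G : SimpleGraph V) (C : Set V) where
  n : ℕ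
  hn3 : 3 ≤ n
  e : ZMod n → V
  inj : Function.Injective e
  hrange : Set.range e = C
  hadj : ∀ p q : ZMod n, G.Adj (e p) (e q) ↔ q = p + 1 ∨ p = q + 1

lemma exists_cycleCoords [Finite V] {G : SimpleGraph V} {C : Set V}
    (hconn : (G.induce C).Connected) (hC : ∀ x ∈ C, (G.neighborSet x ∩ C).ncard = 2) :
    Nonempty (CycleCoords G C) := by
  classical
  obtain ⟨x₀'⟩ := hconn.nonempty
  obtain ⟨x₀, hx₀⟩ := x₀'
  obtain ⟨a, b, hab, hset⟩ := Set.ncard_eq_two.mp (hC x₀ hx₀)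
  have ha : a ∈ G.neighborSet x₀ ∩ C := by rw [hset]; exact Set.mem_insert _ _
  set x₁ := a with hx₁def
  have hx₁ : x₁ ∈ C := ha.2
  have hadj : G.Adj x₀ x₁ := ha.1
  set f := seq G C x₀ x₁ with hfdef
  obtain ⟨p, hp3, h0, h1, hinj⟩ := exists_period hC hx₀ hx₁ hadj
  haveI : NeZero p := ⟨by omega⟩
  haveI : Fact (1 < p) := ⟨by omega⟩
  set e : ZMod p → V := fun i => f i.val with hedef
  have he_cast : ∀ m : ℕ, e (m : ZMod p) = f m := by
    intro m
    show f ((m : ZMod p)).val = f m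
    rw [ZMod.val_natCast]
    exact seq_mod h0 h1 m
  have hmemrange : ∀ m : ℕ, f m ∈ Set.range e := fun m => ⟨(m : ZMod p), he_cast m⟩
  have hmemC : ∀ m : ℕ, f m ∈ C := fun m => (seq_inv hC hx₀ hx₁ hadj m).1
  have hnbrs : ∀ m : ℕ, G.neighborSet (f (m+1)) ∩ C = {f m, f (m+2)} :=
    fun m => (seq_nbrs hC hx₀ hx₁ hadj m).1
  have hper : ∀ m : ℕ, f (m + p) = f m := seq_period h0 h1
  have hnbrs' : ∀ m : ℕ, G.neighborSet (f m) ∩ C = {f (m + p - 1), f (m + 1)} := by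
    intro m
    have e1 : m + p - 1 + 1 = m + p := by omega
    have e2 : m + p - 1 + 2 = (m + 1) + p := by omega
    have := hnbrs (m + p - 1)
    rw [e1, e2, hper m, hper (m+1)] at this
    exact this
  have hrange : Set.range e = C := by
    apply Set.eq_of_subset_of_subset
    · rintro _ ⟨i, rfl⟩; exact hmemC i.val
    · intro y hy
      have hreach := (hconn ⟨x₀, hx₀⟩ ⟨y, hy⟩)
      obtain ⟨w⟩ := hreach
      have key : ∀ {s t : ↥C} (w : (G.induce C).Walk s t),
          (s : V) ∈ Set.range e → (t : V) ∈ Set.range e := by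
        intro s t w
        induction w with
        | nil => exact id
        | @cons s c t h w ih =>
          intro hs
          apply ih
          obtain ⟨i, hi⟩ := hs
          have hGadj : G.Adj (s : V) (c : V) := by
            simpa using h
          have : (c : V) ∈ G.neighborSet (f i.val) ∩ C := by
            rw [show f i.val = (s : V) from hi]
            exact ⟨hGadj, c.2⟩
          rw [hnbrs' i.val] at this
          rcases Set.mem_insert_iff.mp this with hc | hc
          · rw [hc]; exact hmemrange _
          · rw [Set.mem_singleton_iff.mp hc]; exact hmemrange _
      exact key w ⟨(0 : ZMod p), by have h0' := he_cast 0; simp only [Nat.cast_zero] at h0'; exact h0'⟩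
  have he_inj : Function.Injective e := by
    intro i j hij
    by_contra hne
    rcases Nat.lt_or_ge i.val j.val with h | h
    · exact hinj i.val j.val h j.val_lt hij
    · have h' : j.val < i.val := by
        rcases Nat.lt_or_ge j.val i.val with h2 | h2
        · exact h2
        · exact absurd (ZMod.val_injective p (by omega)) hne
      exact hinj j.val i.val h' i.val_lt hij.symm
  refine ⟨⟨p, hp3, e, he_inj, hrange, ?_⟩⟩
  intro i j
  constructor
  · intro hGA
    have : (e j) ∈ G.neighborSet (f i.val) ∩ C := ⟨hGA, by rw [← hrange]; exact ⟨j, rfl⟩⟩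
    rw [hnbrs' i.val] at this
    rcases Set.mem_insert_iff.mp this with hc | hc
    · right
      have : e j = e ((i.val + p - 1 : ℕ) : ZMod p) := by rw [he_cast]; exact hc
      have hj : j = ((i.val + p - 1 : ℕ) : ZMod p) := he_inj this
      have : ((i.val + p - 1 : ℕ) : ZMod p) = i - 1 := by
        have h1 : (1 : ℕ) ≤ i.val + p := by omega
        rw [Nat.cast_sub h1]
        push_cast [ZMod.natCast_self]
        rw [ZMod.natCast_rightInverse i]
        ring
      rw [hj, this]; ring
    · left
      have hc' := Set.mem_singleton_iff.mp hc
      have : e j = e ((i.val + 1 : ℕ) : ZMod p) := by rw [he_cast]; exact hc'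
      have hj : j = ((i.val + 1 : ℕ) : ZMod p) := he_inj this
      rw [hj]
      push_cast
      rw [ZMod.natCast_rightInverse i]
  · intro hor
    have hstep : ∀ x : ZMod p, G.Adj (e x) (e (x + 1)) := by
      intro x
      have : e (x + 1) = f (x.val + 1) := by
        have : ((x.val + 1 : ℕ) : ZMod p) = x + 1 := by
          push_cast; rw [ZMod.natCast_rightInverse x]
        rw [← this, he_cast]
      rw [this]
      exact (seq_inv hC hx₀ hx₁ hadj x.val).2.2
    rcases hor with rfl | rfl
    · exact hstep i
    · exact (hstep j).symm


lemma ncard_split {α : Type} (S : Set α) (hfin : S.Finite) (a : α) :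
    S.ncard = (if a ∈ S then 1 else 0) + (S \ {a}).ncard := by
  classical
  by_cases h : a ∈ S
  · rw [if_pos h]
    have hS : S = insert a (S \ {a}) := by
      rw [Set.insert_diff_singleton]
      exact (Set.insert_eq_of_mem h).symm
    conv_lhs => rw [hS]
    rw [Set.ncard_insert_of_notMem (by simp) hfin.diff]
    omega
  · rw [if_neg h, Set.diff_singleton_eq_self h, zero_add]

lemma ncard_subset_triple {α : Type} {a b c : α} (S : Set α)
    (hab : a ≠ b) (hac : a ≠ c) (hbc : b ≠ c) (hS : S ⊆ {a, b, c}) :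
    S.ncard = (if a ∈ S then 1 else 0) + (if b ∈ S then 1 else 0) + (if c ∈ S then 1 else 0) := by
  classical
  have hfin : S.Finite := Set.Finite.subset (by
    exact (Set.finite_singleton c).insert b |>.insert a) hS
  rw [ncard_split S hfin a, ncard_split _ hfin.diff b, ncard_split _ hfin.diff.diff c]
  have e1 : (b ∈ S \ {a}) ↔ b ∈ S := by simp [hab.symm]
  have e2 : (c ∈ ((S \ {a}) \ {b})) ↔ c ∈ S := by
    simp only [Set.mem_diff, Set.mem_singleton_iff]
    constructor
    · exact fun h => h.1.1
    · exact fun h => ⟨⟨h, hac.symm⟩, hbc.symm⟩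
  have e3 : ((((S \ {a}) \ {b}) \ {c}) : Set α) = ∅ := by
    ext x
    simp only [Set.mem_diff, Set.mem_singleton_iff, Set.mem_empty_iff_false, iff_false]
    rintro ⟨⟨⟨hx, h1⟩, h2⟩, h3⟩
    rcases hS hx with rfl | rfl | rfl <;> simp_all
  rw [e3, Set.ncard_empty]
  simp only [e1, e2]
  omega

lemma downclosed_eq_range (J : Finset ℕ) (h : ∀ j ∈ J, ∀ i ≤ j, i ∈ J) :
    J = Finset.range J.card := by
  have hsub : J ⊆ Finset.range J.card := by
    intro j hj
    rw [Finset.mem_range]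
    by_contra hge
    push_neg at hge
    have hr : Finset.range (j+1) ⊆ J := by
      intro i hi
      exact h j hj i (Nat.lt_succ_iff.mp (Finset.mem_range.mp hi))
    have := Finset.card_le_card hr
    rw [Finset.card_range] at this
    omega
  exact Finset.eq_of_subset_of_card_le hsub (by rw [Finset.card_range])

lemma wedge_coords [Finite V] {G : SimpleGraph V} {C I : Set V} (cc : CycleCoords G C)
    {W : G.Subgraph} {w : V}
    (hIC : I = Cᶜ) (hwI : w ∈ I) (hWI : W.verts ∩ I = {w})
    (hdeg : ∀ x ∈ W.verts, (W.neighborSet x).ncard = 2) :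
    ∃ (a₀ : ZMod cc.n) (ℓ : ℕ), 2 ≤ ℓ ∧ ℓ ≤ cc.n ∧
      (∀ x : ZMod cc.n, cc.e x ∈ W.verts ↔ (x - a₀).val < ℓ) ∧
      (∀ x : ZMod cc.n, W.Adj (cc.e (x-1)) (cc.e x) ↔
        (1 ≤ (x - a₀).val ∧ (x - a₀).val < ℓ)) ∧
      (∀ x : ZMod cc.n, W.Adj w (cc.e x) ↔
        (x = a₀ ∨ x = a₀ + ((ℓ - 1 : ℕ) : ZMod cc.n))) := by
  obtain ⟨n, hn3, e, einj, erange, eadj⟩ := cc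
  dsimp only at *
  haveI : NeZero n := ⟨by omega⟩
  haveI : Fact (1 < n) := ⟨by omega⟩
  have heC : ∀ x : ZMod n, e x ∈ C := by
    intro x; rw [← erange]; exact ⟨x, rfl⟩
  have hwC : w ∉ C := by
    intro h
    have : w ∈ Cᶜ := hIC ▸ hwI
    exact this h
  have henotw : ∀ x : ZMod n, e x ≠ w := fun x h => hwC (h ▸ heC x)
  have hw_mem : w ∈ W.verts := by
    have : w ∈ W.verts ∩ I := by rw [hWI]; rfl
    exact this.1
  have hsubC : ∀ y ∈ W.verts, y ≠ w → y ∈ C := by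
    intro y hy hyw
    by_contra hyC
    have : y ∈ W.verts ∩ I := ⟨hy, hIC ▸ hyC⟩
    rw [hWI] at this
    exact hyw this
  set A : Finset (ZMod n) := Finset.univ.filter (fun x => e x ∈ W.verts) with hAdef
  set E : Finset (ZMod n) := Finset.univ.filter (fun x => W.Adj (e (x-1)) (e x)) with hEdef
  have memA : ∀ x, x ∈ A ↔ e x ∈ W.verts := by
    intro x; rw [hAdef]; simp
  have memE : ∀ x, x ∈ E ↔ W.Adj (e (x-1)) (e x) := by
    intro x; rw [hEdef]; simp
  have hEsubA : E ⊆ A := by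
    intro x hx
    rw [memE] at hx
    exact (memA x).mpr hx.snd_mem
  have hEshift : ∀ x ∈ E, x - 1 ∈ A := by
    intro x hx
    rw [memE] at hx
    exact (memA _).mpr hx.fst_mem
  have hclass : ∀ (x : ZMod n) (y : V), W.Adj (e x) y → y = w ∨ y = e (x-1) ∨ y = e (x+1) := by
    intro x y h
    by_cases hyw : y = w
    · exact Or.inl hyw
    · obtain ⟨z, rfl⟩ : ∃ z, e z = y := by
        have : y ∈ Set.range e := erange ▸ hsubC y h.snd_mem hyw
        exact this
      rcases (eadj x z).mp (W.adj_sub h) with hz | hz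
      · right; right; rw [hz]
      · right; left
        have : z = x - 1 := by rw [hz]; ring
        rw [this]
  have hne2 : ∀ x : ZMod n, e (x - 1) ≠ e (x + 1) := by
    intro x h
    have h2 := einj h
    have h4 : (x + 1) - (x - 1) = 0 := by rw [← h2]; ring
    have h3 : ((2 : ℕ) : ZMod n) = 0 := by
      push_cast
      linear_combination h4
    have := congrArg ZMod.val h3
    rw [ZMod.val_natCast, ZMod.val_zero, Nat.mod_eq_of_lt (by omega)] at this
    omega
  have hid : ∀ x ∈ A, ((if W.Adj (e x) w then 1 else 0) +
      (if x ∈ E then 1 else 0) + (if x + 1 ∈ E then 1 else 0) : ℕ) = 2 := by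
    intro x hx
    have h2 := hdeg (e x) ((memA x).mp hx)
    have hsub : W.neighborSet (e x) ⊆ {w, e (x-1), e (x+1)} := by
      intro y hy
      rcases hclass x y hy with h | h | h
      · exact Or.inl h
      · exact Or.inr (Or.inl h)
      · exact Or.inr (Or.inr h)
    rw [ncard_subset_triple _ (Ne.symm (henotw _)) (Ne.symm (henotw _)) (hne2 x) hsub] at h2
    have e1 : (w ∈ W.neighborSet (e x)) ↔ W.Adj (e x) w := Iff.rfl
    have e2 : (e (x-1) ∈ W.neighborSet (e x)) ↔ x ∈ E := by
      rw [memE]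
      exact ⟨fun h => h.symm, fun h => h.symm⟩
    have e3 : (e (x+1) ∈ W.neighborSet (e x)) ↔ x + 1 ∈ E := by
      rw [memE, show x + 1 - 1 = x by ring]
      exact Iff.rfl
    rw [e1, e2, e3] at h2
    split_ifs at h2 ⊢ <;> omega
  set N' : Finset (ZMod n) := A.filter (fun x => W.Adj (e x) w) with hN'def
  have hN'card : N'.card = 2 := by
    have himg : W.neighborSet w = e '' ↑N' := by
      ext y
      constructor
      · intro hy
        have hyv : y ∈ W.verts := hy.snd_mem
        have hyw : y ≠ w := (W.adj_sub hy).ne'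
        obtain ⟨z, rfl⟩ : ∃ z, e z = y := by
          have : y ∈ Set.range e := by rw [erange]; exact hsubC y hyv hyw
          exact this
        refine ⟨z, ?_, rfl⟩
        rw [Finset.mem_coe, hN'def, Finset.mem_filter]
        exact ⟨(memA z).mpr hyv, hy.symm⟩
      · rintro ⟨z, hz, rfl⟩
        rw [Finset.mem_coe, hN'def, Finset.mem_filter] at hz
        exact hz.2.symm
    have := hdeg w hw_mem
    rw [himg, Set.ncard_image_of_injective _ einj, Set.ncard_coe_finset] at this
    exact this
  have hsum : 2 * A.card = N'.card + E.card + E.card := by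
    have h1 : ∑ x ∈ A, ((if W.Adj (e x) w then 1 else 0) +
        (if x ∈ E then 1 else 0) + (if x + 1 ∈ E then 1 else 0) : ℕ) = 2 * A.card := by
      rw [Finset.sum_congr rfl hid]
      simp [mul_comm]
    rw [← h1, Finset.sum_add_distrib, Finset.sum_add_distrib]
    congr 1
    · congr 1
      · rw [Finset.sum_boole]; simp [hN'def]
      · rw [Finset.sum_boole]
        rw [Finset.filter_mem_eq_inter, Finset.inter_eq_right.mpr hEsubA]
        simp
    · have hinj1 : ∀ x ∈ A, ∀ y ∈ A, x + 1 = y + 1 → x = y :=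
        fun x _ y _ h => add_right_cancel h
      have himg : ∑ x ∈ A, (if x + 1 ∈ E then 1 else 0 : ℕ) =
          ∑ y ∈ A.image (fun x => x + 1), (if y ∈ E then 1 else 0 : ℕ) :=
        (Finset.sum_image (f := fun y => if y ∈ E then (1:ℕ) else 0) hinj1).symm
      rw [himg, Finset.sum_boole, Finset.filter_mem_eq_inter,
        Finset.inter_eq_right.mpr]
      · simp
      · intro x hx
        rw [Finset.mem_image]
        exact ⟨x - 1, hEshift x hx, by ring⟩
  have hA2 : 2 ≤ A.card := by
    have := Finset.card_le_card (Finset.filter_subset (fun x => W.Adj (e x) w) A)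
    rw [hN'card] at this
    exact this
  have hEcard : E.card = A.card - 1 := by omega
  obtain ⟨a₀, ha₀⟩ : ∃ a₀, A \ E = {a₀} := by
    rw [← Finset.card_eq_one, Finset.card_sdiff_of_subset hEsubA]
    omega
  have ha₀A : a₀ ∈ A := by
    have : a₀ ∈ A \ E := ha₀ ▸ Finset.mem_singleton_self a₀
    exact (Finset.mem_sdiff.mp this).1
  have ha₀E : a₀ ∉ E := by
    have : a₀ ∈ A \ E := ha₀ ▸ Finset.mem_singleton_self a₀
    exact (Finset.mem_sdiff.mp this).2
  have memE_iff : ∀ x, x ∈ E ↔ x ∈ A ∧ x ≠ a₀ := by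
    intro x
    constructor
    · intro hx
      refine ⟨hEsubA hx, ?_⟩
      rintro rfl
      exact ha₀E hx
    · rintro ⟨hxA, hxa⟩
      by_contra hxE
      have : x ∈ A \ E := Finset.mem_sdiff.mpr ⟨hxA, hxE⟩
      rw [ha₀] at this
      exact hxa (Finset.mem_singleton.mp this)
  have hval : ∀ (x : ZMod n) (i : ℕ), i ≤ (x - a₀).val →
      (x - (i : ZMod n) - a₀).val = (x - a₀).val - i := by
    intro x i hi
    have h4 : (x - (i:ZMod n) - a₀) = ((((x - a₀).val - i : ℕ)) : ZMod n) := by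
      push_cast [Nat.cast_sub hi]
      rw [cast_val_eq]
      ring
    rw [h4]
    exact ZMod.val_cast_of_lt (Nat.lt_of_le_of_lt (Nat.sub_le _ _) (ZMod.val_lt _))
  have hdesc : ∀ (x : ZMod n), x ∈ A → ∀ i : ℕ, i ≤ (x - a₀).val → x - (i : ZMod n) ∈ A := by
    intro x hx i
    induction i with
    | zero => intro _; simpa using hx
    | succ i ih =>
      intro hi
      have hyA : x - (i : ZMod n) ∈ A := ih (Nat.le_of_succ_le hi)
      have hyne : x - (i : ZMod n) ≠ a₀ := by
        intro h
        have := hval x i (by omega)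
        rw [h, sub_self, ZMod.val_zero] at this
        omega
      have hyE : x - (i : ZMod n) ∈ E := (memE_iff _).mpr ⟨hyA, hyne⟩
      have := hEshift _ hyE
      have heq : x - ((i+1 : ℕ) : ZMod n) = x - (i : ZMod n) - 1 := by push_cast; ring
      rw [heq]
      exact this
  have hJinj : Function.Injective (fun x : ZMod n => (x - a₀).val) := by
    intro x y h
    have := ZMod.val_injective n h
    have : x - a₀ = y - a₀ := this
    exact sub_left_injective this
  set J : Finset ℕ := A.image (fun x => (x - a₀).val) with hJdef
  have hJcard : J.card = A.card := Finset.card_image_of_injective A hJinj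
  have hJdown : ∀ j ∈ J, ∀ i, i ≤ j → i ∈ J := by
    intro j hj i hij
    rw [hJdef, Finset.mem_image] at hj
    obtain ⟨x, hxA, rfl⟩ := hj
    rw [hJdef, Finset.mem_image]
    refine ⟨x - ((((x - a₀).val - i) : ℕ) : ZMod n), hdesc x hxA _ (by omega), ?_⟩
    rw [hval x _ (by omega)]
    omega
  have hJrange : J = Finset.range A.card := by
    rw [← hJcard]
    exact downclosed_eq_range J (fun j hj i hij => hJdown j hj i hij)
  set ℓ := A.card with hldef
  have memA_iff : ∀ x, x ∈ A ↔ (x - a₀).val < ℓ := by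
    intro x
    constructor
    · intro hx
      have : (x - a₀).val ∈ J := Finset.mem_image_of_mem _ hx
      rw [hJrange, Finset.mem_range] at this
      exact this
    · intro hx
      have : (x - a₀).val ∈ J := by rw [hJrange, Finset.mem_range]; exact hx
      rw [hJdef, Finset.mem_image] at this
      obtain ⟨y, hyA, hy⟩ := this
      have : y = x := hJinj hy
      rwa [← this]
  have hℓn : ℓ ≤ n := by
    have h5 := Finset.card_le_univ A
    have h6 : Fintype.card (ZMod n) = n := ZMod.card n
    omega
  have hxa_iff : ∀ x : ZMod n, x ≠ a₀ ↔ (x - a₀).val ≠ 0 := by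
    intro x
    rw [Ne, Ne, ← sub_eq_zero (a := x), ← ZMod.val_eq_zero]
  have memE_iff' : ∀ x, x ∈ E ↔ (1 ≤ (x - a₀).val ∧ (x - a₀).val < ℓ) := by
    intro x
    rw [memE_iff, memA_iff, hxa_iff]
    omega
  have hxE1 : ∀ x : ZMod n, (x + 1 ∈ E ↔ (x - a₀).val + 1 < ℓ) := by
    intro x
    by_cases hxa : x + 1 = a₀
    · have hx_ne : x ≠ a₀ := by
        intro h
        rw [h] at hxa
        have h10 : (1 : ZMod n) = 0 := by linear_combination hxa
        have h11 := congrArg ZMod.val h10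
        rw [ZMod.val_one, ZMod.val_zero] at h11
        omega
      have hval1 : (a₀ - x).val = 1 := by
        rw [show a₀ - x = 1 by rw [← hxa]; ring, ZMod.val_one]
      have hvx : (x - a₀).val = n - 1 := by
        have h12 := val_add_val_neg (a := x) (b := a₀) hx_ne
        omega
      constructor
      · intro h
        rw [hxa] at h
        exact absurd h ha₀E
      · intro h
        exfalso
        omega
    · rw [memE_iff', val_sub_add_one hxa]
      omega
  have nbrw_iff : ∀ x : ZMod n, W.Adj w (e x) ↔
      (x = a₀ ∨ x = a₀ + ((ℓ - 1 : ℕ) : ZMod n)) := by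
    intro x
    have hvall1 : (((ℓ - 1 : ℕ) : ZMod n)).val = ℓ - 1 := ZMod.val_cast_of_lt (by omega)
    constructor
    · intro h
      have hxA : x ∈ A := (memA x).mpr h.snd_mem
      have hidx := hid x hxA
      rw [if_pos h.symm] at hidx
      have hsum1 : ((if x ∈ E then 1 else 0) + (if x + 1 ∈ E then 1 else 0) : ℕ) = 1 := by omega
      have hk := (memA_iff x).mp hxA
      by_cases h1 : x ∈ E <;> by_cases h2 : x + 1 ∈ E
      · rw [if_pos h1, if_pos h2] at hsum1; omega
      · right
        rw [memE_iff'] at h1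
        rw [hxE1] at h2
        have hkval : (x - a₀).val = ℓ - 1 := by omega
        conv_lhs => rw [eq_add_cast_val x a₀]
        rw [hkval]
      · left
        rw [memE_iff'] at h1
        have : (x - a₀).val = 0 := by omega
        have : x - a₀ = 0 := (ZMod.val_eq_zero _).mp this
        exact sub_eq_zero.mp this
      · rw [if_neg h1, if_neg h2] at hsum1; omega
    · intro hx
      have hxA : x ∈ A := by
        rw [memA_iff]
        rcases hx with rfl | rfl
        · rw [sub_self, ZMod.val_zero]; omega
        · rw [add_sub_cancel_left, hvall1]; omega
      have hidx := hid x hxA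
      have h1 : (if x ∈ E then 1 else 0 : ℕ) + (if x + 1 ∈ E then 1 else 0 : ℕ) = 1 := by
        rcases hx with rfl | rfl
        · rw [if_neg ha₀E, if_pos]
          rw [hxE1, sub_self, ZMod.val_zero]
          omega
        · rw [if_pos, if_neg]
          · rw [hxE1, add_sub_cancel_left, hvall1]
            omega
          · rw [memE_iff', add_sub_cancel_left, hvall1]
            omega
      have : W.Adj (e x) w := by
        by_contra hne
        rw [if_neg hne] at hidx
        omega
      exact this.symm
  exact ⟨a₀, ℓ, hA2, hℓn, fun x => (memA x).symm.trans (memA_iff x),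
    fun x => (memE x).symm.trans (memE_iff' x), nbrw_iff⟩

section Arith
variable {n : ℕ} [NeZero n]

lemma val_ne_zero_iff {a b : ZMod n} : a ≠ b ↔ (a - b).val ≠ 0 := by
  rw [Ne, Ne, ← sub_eq_zero (a := a), ← ZMod.val_eq_zero]

lemma arith_union {a c x : ZMod n} {l m : ℕ}
    (hln : l ≤ n) (hne : a ≠ c)
    (hac : (a - c).val < m) (hca : (c - a).val < l) :
    (x - c).val < m ∨ (x - a).val < l := by
  by_cases ht : (x - c).val < m
  · exact Or.inl ht
  · right
    have hsum : (a - c).val + (c - a).val = n := val_add_val_neg hne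
    have hta1 : (a - c).val ≠ 0 := val_ne_zero_iff.mp hne
    have htle : (a - c).val ≤ (x - c).val := by omega
    have h1 : x - a = (((x - c).val - (a - c).val : ℕ) : ZMod n) := by
      push_cast [Nat.cast_sub htle]
      rw [cast_val_eq, cast_val_eq]
      ring
    rw [h1, ZMod.val_cast_of_lt (by have := ZMod.val_lt (x - c); omega)]
    have := ZMod.val_lt (x - c)
    omega

lemma arith_a1 {a c : ZMod n} {l m : ℕ}
    (hl2 : 2 ≤ l) (hln : l ≤ n) (hne : a ≠ c)
    (hac : (a - c).val < m) (hca : (c - a).val < l) :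
    ((a + ((l - 1 : ℕ) : ZMod n)) - c).val < m := by
  have hsum : (a - c).val + (c - a).val = n := val_add_val_neg hne
  have hta1 : (a - c).val ≠ 0 := val_ne_zero_iff.mp hne
  have hj1 : (c - a).val ≠ 0 := val_ne_zero_iff.mp hne.symm
  have hbig : n ≤ (a - c).val + (l - 1) := by omega
  have h1 : (a + ((l - 1 : ℕ) : ZMod n)) - c
      = ((((a - c).val + (l - 1) - n : ℕ)) : ZMod n) := by
    push_cast [Nat.cast_sub hbig]
    rw [cast_val_eq, ZMod.natCast_self]
    ring
  rw [h1, ZMod.val_cast_of_lt (by omega)]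
  omega

end Arith

end CobwebAux


/-- `σ u ⊓ σ v` has at most two components, with exactly two
components iff `u` and `v` attach to each other's wedges. -/
theorem intersection_components [Finite V] (G : SimpleGraph V) (C I : Set V)
    (hcob : IsCobweb G C I) (σ : V → G.Subgraph)
    (hσ : ∀ v ∈ I, IsWedge G C I (σ v) v)
    (u v : V) (hu : u ∈ I) (hv : v ∈ I) :
    Nat.card ((σ u ⊓ σ v).coe.ConnectedComponent) ≤ 2 ∧
      (Nat.card ((σ u ⊓ σ v).coe.ConnectedComponent) = 2 ↔
        (Attaches G u (σ v) ∧ Attaches G v (σ u))) := by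
  classical
  obtain ⟨⟨hconnC, hC2⟩, hIC, hIne, hindep, hmindeg, hnosub⟩ := hcob
  by_cases huv : u = v
  · -- diagonal case : one component
    subst huv
    rw [inf_idem]
    obtain ⟨⟨hWconn, hWdeg⟩, huI', hvertsI, hN2⟩ := hσ u hu
    have humem : u ∈ (σ u).verts := by
      have h : u ∈ (σ u).verts ∩ I := by rw [hvertsI]; rfl
      exact h.1
    have hsing : Subsingleton ((σ u).coe.ConnectedComponent) :=
      hWconn.preconnected.subsingleton_connectedComponent
    have hne : Nonempty ((σ u).coe.ConnectedComponent) := by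
      obtain ⟨z⟩ := hWconn.nonempty
      exact ⟨(σ u).coe.connectedComponentMk z⟩
    have hcard : Nat.card ((σ u).coe.ConnectedComponent) = 1 :=
      Nat.card_unique
    refine ⟨by omega, ?_⟩
    constructor
    · intro h; omega
    · rintro ⟨hA, -⟩
      exact absurd humem hA.1
  · -- off-diagonal case
    obtain ⟨cc⟩ := CobwebAux.exists_cycleCoords hconnC hC2
    haveI : NeZero cc.n := ⟨by have := cc.hn3; omega⟩
    have hn3 : 3 ≤ cc.n := cc.hn3
    obtain ⟨⟨hWcu, hdegu⟩, -, hvIu, hNu2⟩ := hσ u hu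
    obtain ⟨⟨hWcv, hdegv⟩, -, hvIv, hNv2⟩ := hσ v hv
    obtain ⟨a₀, ℓ, hl2, hln, memA, adjA, nbrA⟩ :=
      CobwebAux.wedge_coords cc hIC hu hvIu hdegu
    obtain ⟨c₀, m, hm2, hmn, memB, adjB, nbrB⟩ :=
      CobwebAux.wedge_coords cc hIC hv hvIv hdegv
    have heC : ∀ x, cc.e x ∈ C := by
      intro x
      have h := Set.mem_range_self (f := cc.e) x
      rwa [cc.hrange] at h
    have humem : u ∈ (σ u).verts := by
      have h : u ∈ (σ u).verts ∩ I := by rw [hvIu]; rfl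
      exact h.1
    have hvmem : v ∈ (σ v).verts := by
      have h : v ∈ (σ v).verts ∩ I := by rw [hvIv]; rfl
      exact h.1
    have hunotv : u ∉ (σ v).verts := by
      intro h
      have h2 : u ∈ (σ v).verts ∩ I := ⟨h, hu⟩
      rw [hvIv] at h2
      exact huv h2
    have hvnotu : v ∉ (σ u).verts := by
      intro h
      have h2 : v ∈ (σ u).verts ∩ I := ⟨h, hv⟩
      rw [hvIu] at h2
      exact huv h2.symm
    have hadjCu : ∀ y, G.Adj u y → y ∈ C := by
      intro y hy
      by_contra hyC
      have hyI : y ∈ I := by rw [hIC]; exact hyC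
      exact hindep u hu y hyI hy
    have hadjCv : ∀ y, G.Adj v y → y ∈ C := by
      intro y hy
      by_contra hyC
      have hyI : y ∈ I := by rw [hIC]; exact hyC
      exact hindep v hv y hyI hy
    have hexS : ∀ x, cc.e x ∈ (σ u ⊓ σ v).verts ↔
        ((x - a₀).val < ℓ ∧ (x - c₀).val < m) := by
      intro x
      constructor
      · intro h
        exact ⟨(memA x).mp h.1, (memB x).mp h.2⟩
      · intro h
        exact ⟨(memA x).mpr h.1, (memB x).mpr h.2⟩
    have hySx : ∀ y, y ∈ (σ u ⊓ σ v).verts → ∃ x, y = cc.e x := by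
      intro y hy
      have hyu : y ≠ u := by
        rintro rfl
        exact hunotv hy.2
      have hyC : y ∈ C := by
        by_contra hyC
        have hyI : y ∈ I := by rw [hIC]; exact hyC
        have h2 : y ∈ (σ u).verts ∩ I := ⟨hy.1, hyI⟩
        rw [hvIu] at h2
        exact hyu h2
      obtain ⟨x, hx⟩ : y ∈ Set.range cc.e := by rw [cc.hrange]; exact hyC
      exact ⟨x, hx.symm⟩
    -- G-neighbours of u inside its wedge
    have hnbru : (σ u).neighborSet u = (σ u).verts ∩ G.neighborSet u := by
      apply Set.eq_of_subset_of_ncard_le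
      · intro y hy
        exact ⟨hy.snd_mem, (σ u).adj_sub hy⟩
      · rw [hNu2, hdegu u humem]
      · exact Set.toFinite _
    have hnbrv : (σ v).neighborSet v = (σ v).verts ∩ G.neighborSet v := by
      apply Set.eq_of_subset_of_ncard_le
      · intro y hy
        exact ⟨hy.snd_mem, (σ v).adj_sub hy⟩
      · rw [hNv2, hdegv v hvmem]
      · exact Set.toFinite _
    have hGAu : ∀ x, (x - a₀).val < ℓ →
        (G.Adj u (cc.e x) ↔ (x = a₀ ∨ x = a₀ + ((ℓ - 1 : ℕ) : ZMod cc.n))) := by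
      intro x hx
      constructor
      · intro h
        have hmem : cc.e x ∈ (σ u).verts := (memA x).mpr hx
        have h2 : cc.e x ∈ (σ u).neighborSet u := by
          rw [hnbru]; exact ⟨hmem, h⟩
        exact (nbrA x).mp h2
      · intro h
        exact (σ u).adj_sub ((nbrA x).mpr h)
    have hGAv : ∀ x, (x - c₀).val < m →
        (G.Adj v (cc.e x) ↔ (x = c₀ ∨ x = c₀ + ((m - 1 : ℕ) : ZMod cc.n))) := by
      intro x hx
      constructor
      · intro h
        have hmem : cc.e x ∈ (σ v).verts := (memB x).mpr hx
        have h2 : cc.e x ∈ (σ v).neighborSet v := by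
          rw [hnbrv]; exact ⟨hmem, h⟩
        exact (nbrB x).mp h2
      · intro h
        exact (σ v).adj_sub ((nbrB x).mpr h)
    have hAttu_iff : Attaches G u (σ v) ↔ (∀ x, G.Adj u (cc.e x) → (x - c₀).val < m) := by
      constructor
      · intro hA x hx
        exact (memB x).mp (hA.2 hx)
      · intro h
        refine ⟨hunotv, ?_⟩
        intro y hy
        have hyC : y ∈ C := hadjCu y hy
        obtain ⟨x, rfl⟩ : ∃ x, cc.e x = y := by rw [← cc.hrange] at hyC; exact hyC
        exact (memB x).mpr (h x hy)
    have hAttv_iff : Attaches G v (σ u) ↔ (∀ x, G.Adj v (cc.e x) → (x - a₀).val < ℓ) := by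
      constructor
      · intro hA x hx
        exact (memA x).mp (hA.2 hx)
      · intro h
        refine ⟨hvnotu, ?_⟩
        intro y hy
        have hyC : y ∈ C := hadjCv y hy
        obtain ⟨x, rfl⟩ : ∃ x, cc.e x = y := by rw [← cc.hrange] at hyC; exact hyC
        exact (memA x).mpr (h x hy)
    -- reachability towards the two anchors a₀, c₀
    have reach_anchor : ∀ k : ℕ, ∀ x : ZMod cc.n, (x - a₀).val = k →
        ∀ hx : cc.e x ∈ (σ u ⊓ σ v).verts,
        ∃ (t : ZMod cc.n) (ht : cc.e t ∈ (σ u ⊓ σ v).verts),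
          (t = a₀ ∨ t = c₀) ∧ (σ u ⊓ σ v).coe.Reachable ⟨cc.e x, hx⟩ ⟨cc.e t, ht⟩ := by
      intro k
      induction k using Nat.strong_induction_on with
      | _ k ih =>
        intro x hxk hx
        by_cases hxa : x = a₀
        · exact ⟨x, hx, Or.inl hxa, Reachable.refl _⟩
        by_cases hxc : x = c₀
        · exact ⟨x, hx, Or.inr hxc, Reachable.refl _⟩
        have hvals := (hexS x).mp hx
        have h1 : 1 ≤ (x - a₀).val := by
          have := CobwebAux.val_ne_zero_iff.mp hxa; omega
        have h2 : 1 ≤ (x - c₀).val := by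
          have := CobwebAux.val_ne_zero_iff.mp hxc; omega
        have hadj1 : (σ u ⊓ σ v).Adj (cc.e (x-1)) (cc.e x) :=
          ⟨(adjA x).mpr ⟨h1, hvals.1⟩, (adjB x).mpr ⟨h2, hvals.2⟩⟩
        have hxm : cc.e (x-1) ∈ (σ u ⊓ σ v).verts := hadj1.fst_mem
        have hval' : (x - 1 - a₀).val = k - 1 := by
          have hx1 : (x - 1) + 1 = x := by ring
          have hne : (x - 1) + 1 ≠ a₀ := by rw [hx1]; exact hxa
          have := CobwebAux.val_sub_add_one hne
          rw [hx1] at this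
          omega
        obtain ⟨t, ht, htor, hreach⟩ := ih (k-1) (by omega) (x-1) hval' hxm
        refine ⟨t, ht, htor, ?_⟩
        have hHadj : (σ u ⊓ σ v).coe.Adj ⟨cc.e (x-1), hxm⟩ ⟨cc.e x, hx⟩ := hadj1
        exact hHadj.symm.reachable.trans hreach
    by_cases hcrit : a₀ ≠ c₀ ∧ (a₀ - c₀).val < m ∧ (c₀ - a₀).val < ℓ
    · -- exactly two components
      obtain ⟨hne0, hac, hca⟩ := hcrit
      have hma : cc.e a₀ ∈ (σ u ⊓ σ v).verts :=
        (hexS a₀).mpr ⟨by rw [sub_self, ZMod.val_zero]; omega, hac⟩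
      have hmc : cc.e c₀ ∈ (σ u ⊓ σ v).verts :=
        (hexS c₀).mpr ⟨hca, by rw [sub_self, ZMod.val_zero]; omega⟩
      have hattu : Attaches G u (σ v) := by
        rw [hAttu_iff]
        intro x hx
        by_cases hxl : (x - a₀).val < ℓ
        · rcases (hGAu x hxl).mp hx with rfl | rfl
          · exact hac
          · exact CobwebAux.arith_a1 hl2 hln hne0 hac hca
        · rcases CobwebAux.arith_union (x := x) hln hne0 hac hca with h | h
          · exact h
          · exact absurd h hxl
      have hattv : Attaches G v (σ u) := by
        rw [hAttv_iff]
        intro x hx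
        by_cases hxl : (x - c₀).val < m
        · rcases (hGAv x hxl).mp hx with rfl | rfl
          · exact hca
          · exact CobwebAux.arith_a1 hm2 hmn hne0.symm hca hac
        · rcases CobwebAux.arith_union (x := x) hmn hne0.symm hca hac with h | h
          · exact h
          · exact absurd h hxl
      set D := (c₀ - a₀).val with hDdef
      have hD1 : 1 ≤ D := by
        have := CobwebAux.val_ne_zero_iff.mp (Ne.symm hne0); omega
      set φ : ↥(σ u ⊓ σ v).verts → Prop :=
        (fun z => ∃ p, (z : V) = cc.e p ∧ (p - a₀).val < D) with hφdef
      have hφ : ∀ (z : ↥(σ u ⊓ σ v).verts) (p : ZMod cc.n), (z : V) = cc.e p →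
          (φ z ↔ (p - a₀).val < D) := by
        intro z p hp
        constructor
        · rintro ⟨q, hq, hlt⟩
          have : q = p := cc.inj (hq.symm.trans hp)
          rwa [← this]
        · intro h
          exact ⟨p, hp, h⟩
      have key : ∀ (p q : ZMod cc.n), (σ u ⊓ σ v).Adj (cc.e p) (cc.e q) → q = p + 1 →
          ((p - a₀).val < D ↔ (q - a₀).val < D) := by
        intro p q hadj hq
        have hq1 : q - 1 = p := by rw [hq]; ring
        have hA1 : (σ u).Adj (cc.e (q - 1)) (cc.e q) := by
          rw [hq1]
          exact hadj.1
        have hB1 : (σ v).Adj (cc.e (q - 1)) (cc.e q) := by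
          rw [hq1]
          exact hadj.2
        have hqa := ((adjA q).mp hA1).1
        have hqc := ((adjB q).mp hB1).1
        have hqnea : q ≠ a₀ := CobwebAux.val_ne_zero_iff.mpr (by omega)
        have hqnec : q ≠ c₀ := CobwebAux.val_ne_zero_iff.mpr (by omega)
        have hstep1 : (q - a₀).val = (p - a₀).val + 1 := by
          have := CobwebAux.val_sub_add_one (x := p) (a := a₀) (by rw [← hq]; exact hqnea)
          rw [← hq] at this
          exact this
        constructor
        · intro h
          rcases Nat.lt_or_ge ((p - a₀).val + 1) D with h2 | h2
          · omega
          · exfalso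
            have hDeq : (q - a₀).val = D := by omega
            have : q - a₀ = c₀ - a₀ := by
              have h3 := CobwebAux.cast_val_eq (n := cc.n) (q - a₀)
              have h4 := CobwebAux.cast_val_eq (n := cc.n) (c₀ - a₀)
              rw [← h3, ← h4, hDeq]
            have : q = c₀ := by
              have h5 := sub_left_injective this
              exact h5
            exact hqnec this
        · intro h
          omega
      have hstep : ∀ (y z : ↥(σ u ⊓ σ v).verts), (σ u ⊓ σ v).coe.Adj y z → (φ y ↔ φ z) := by
        intro y z hadj
        obtain ⟨p, hp⟩ := hySx y.val y.2
        obtain ⟨q, hq⟩ := hySx z.val z.2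
        have hadj2 : (σ u ⊓ σ v).Adj (cc.e p) (cc.e q) := by
          rw [← hp, ← hq]
          exact hadj
        have hGadj : G.Adj (cc.e p) (cc.e q) := (σ u).adj_sub hadj2.1
        rw [hφ y p hp, hφ z q hq]
        rcases (cc.hadj p q).mp hGadj with h | h
        · exact key p q hadj2 h
        · exact (key q p hadj2.symm h).symm
      have hwalk : ∀ (y z : ↥(σ u ⊓ σ v).verts), (σ u ⊓ σ v).coe.Walk y z → (φ y ↔ φ z) := by
        intro y z w
        induction w with
        | nil => exact Iff.rfl
        | cons h w ih => exact (hstep _ _ h).trans ih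
      have hKane : (σ u ⊓ σ v).coe.connectedComponentMk ⟨cc.e a₀, hma⟩ ≠
          (σ u ⊓ σ v).coe.connectedComponentMk ⟨cc.e c₀, hmc⟩ := by
        intro h
        obtain ⟨w⟩ := (SimpleGraph.ConnectedComponent.eq).mp h
        have hiff := hwalk _ _ w
        have hφa : φ ⟨cc.e a₀, hma⟩ := ⟨a₀, rfl, by rw [sub_self, ZMod.val_zero]; omega⟩
        have hφc : ¬ φ ⟨cc.e c₀, hmc⟩ := by
          rintro ⟨p, hp, hlt⟩
          have : c₀ = p := cc.inj hp
          rw [← this] at hlt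
          omega
        exact hφc (hiff.mp hφa)
      have hall : ∀ K : (σ u ⊓ σ v).coe.ConnectedComponent,
          K = (σ u ⊓ σ v).coe.connectedComponentMk ⟨cc.e a₀, hma⟩ ∨
          K = (σ u ⊓ σ v).coe.connectedComponentMk ⟨cc.e c₀, hmc⟩ := by
        intro K
        obtain ⟨z, hz⟩ := K.exists_rep
        obtain ⟨x, hx⟩ := hySx z.val z.2
        have hx' : cc.e x ∈ (σ u ⊓ σ v).verts := hx ▸ z.2
        have hzz : z = ⟨cc.e x, hx'⟩ := Subtype.ext hx
        obtain ⟨t, ht, htor, hreach⟩ := reach_anchor ((x - a₀).val) x rfl hx'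
        have hKmk : K = (σ u ⊓ σ v).coe.connectedComponentMk ⟨cc.e t, ht⟩ := by
          rw [← hz, hzz]
          exact SimpleGraph.ConnectedComponent.sound hreach
        rcases htor with rfl | rfl
        · left
          rw [hKmk]
        · right
          rw [hKmk]
      have hcard2 : Nat.card ((σ u ⊓ σ v).coe.ConnectedComponent) = 2 := by
        rw [Nat.card_eq_two_iff]
        refine ⟨_, _, hKane, ?_⟩
        ext K
        simp only [Set.mem_insert_iff, Set.mem_singleton_iff, Set.mem_univ, iff_true]
        exact hall K
      rw [hcard2]
      exact ⟨le_refl 2, by simp [hattu, hattv]⟩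
    · -- at most one component
      have hsing : Subsingleton ((σ u ⊓ σ v).coe.ConnectedComponent) := by
        constructor
        intro K K'
        obtain ⟨z, hz⟩ := K.exists_rep
        obtain ⟨z', hz'⟩ := K'.exists_rep
        obtain ⟨x, hx⟩ := hySx z.val z.2
        obtain ⟨x', hx'⟩ := hySx z'.val z'.2
        have hxm : cc.e x ∈ (σ u ⊓ σ v).verts := hx ▸ z.2
        have hxm' : cc.e x' ∈ (σ u ⊓ σ v).verts := hx' ▸ z'.2
        obtain ⟨t, ht, htor, hreach⟩ := reach_anchor ((x - a₀).val) x rfl hxm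
        obtain ⟨t', ht', htor', hreach'⟩ := reach_anchor ((x' - a₀).val) x' rfl hxm'
        have htS := (hexS t).mp ht
        have htS' := (hexS t').mp ht'
        have htt : t = t' := by
          by_cases heq : a₀ = c₀
          · rcases htor with rfl | rfl <;> rcases htor' with rfl | rfl <;>
              simp [heq]
          · have hAB : ¬ ((a₀ - c₀).val < m ∧ (c₀ - a₀).val < ℓ) := by
              intro h
              exact hcrit ⟨heq, h.1, h.2⟩
            rcases htor with rfl | rfl <;> rcases htor' with rfl | rfl
            · rfl
            · exfalso
              apply hAB
              constructor
              · have := htS.2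
                exact this
              · have := htS'.1
                exact this
            · exfalso
              apply hAB
              constructor
              · have := htS'.2
                exact this
              · have := htS.1
                exact this
            · rfl
        have hzz : z = (⟨cc.e x, hxm⟩ : ↥(σ u ⊓ σ v).verts) := Subtype.ext hx
        have hzz' : z' = (⟨cc.e x', hxm'⟩ : ↥(σ u ⊓ σ v).verts) := Subtype.ext hx'
        have hK : K = (σ u ⊓ σ v).coe.connectedComponentMk ⟨cc.e t, ht⟩ := by
          rw [← hz, hzz]
          exact SimpleGraph.ConnectedComponent.sound hreach
        have hK' : K' = (σ u ⊓ σ v).coe.connectedComponentMk ⟨cc.e t', ht'⟩ := by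
          rw [← hz', hzz']
          exact SimpleGraph.ConnectedComponent.sound hreach'
        rw [hK, hK']
        subst htt
        rfl
      have hle1 : Nat.card ((σ u ⊓ σ v).coe.ConnectedComponent) ≤ 1 :=
        Finite.card_le_one_iff_subsingleton.mpr hsing
      refine ⟨by omega, ?_⟩
      constructor
      · intro h; omega
      · rintro ⟨hattu, hattv⟩
        exfalso
        have hattu' := hAttu_iff.mp hattu
        have hattv' := hAttv_iff.mp hattv
        have hGa0 : G.Adj u (cc.e a₀) := (σ u).adj_sub ((nbrA a₀).mpr (Or.inl rfl))
        have hGa1 : G.Adj u (cc.e (a₀ + ((ℓ - 1 : ℕ) : ZMod cc.n))) :=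
          (σ u).adj_sub ((nbrA _).mpr (Or.inr rfl))
        have hGc0 : G.Adj v (cc.e c₀) := (σ v).adj_sub ((nbrB c₀).mpr (Or.inl rfl))
        have hGc1 : G.Adj v (cc.e (c₀ + ((m - 1 : ℕ) : ZMod cc.n))) :=
          (σ v).adj_sub ((nbrB _).mpr (Or.inr rfl))
        have hac : (a₀ - c₀).val < m := hattu' _ hGa0
        have hca : (c₀ - a₀).val < ℓ := hattv' _ hGc0
        have hne0 : a₀ ≠ c₀ := by
          intro heq
          have h1 : (a₀ + ((ℓ - 1 : ℕ) : ZMod cc.n) - c₀).val < m := hattu' _ hGa1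
          rw [← heq, add_sub_cancel_left,
            ZMod.val_cast_of_lt (show ℓ - 1 < cc.n by omega)] at h1
          have h2 : (c₀ + ((m - 1 : ℕ) : ZMod cc.n) - a₀).val < ℓ := hattv' _ hGc1
          rw [heq, add_sub_cancel_left,
            ZMod.val_cast_of_lt (show m - 1 < cc.n by omega)] at h2
          have hlm : ℓ = m := by omega
          have hNeq : G.neighborSet u = G.neighborSet v := by
            ext y
            constructor
            · intro hy
              have hyC : y ∈ C := hadjCu y hy
              obtain ⟨x, rfl⟩ : ∃ x, cc.e x = y := by rw [← cc.hrange] at hyC; exact hyC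
              have hxm2 : (x - c₀).val < m := hattu' x hy
              have hxl : (x - a₀).val < ℓ := by rw [heq]; omega
              have hGAv' : G.Adj v (cc.e x) := by
                rcases (hGAu x hxl).mp hy with rfl | h
                · rw [heq]
                  exact hGc0
                · rw [h, heq, hlm]
                  exact hGc1
              exact hGAv'
            · intro hy
              have hyC : y ∈ C := hadjCv y hy
              obtain ⟨x, rfl⟩ : ∃ x, cc.e x = y := by rw [← cc.hrange] at hyC; exact hyC
              have hxm2 : (x - a₀).val < ℓ := hattv' x hy
              have hxl : (x - c₀).val < m := by rw [← heq]; omega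
              have hGAu' : G.Adj u (cc.e x) := by
                rcases (hGAv x hxl).mp hy with rfl | h
                · rw [← heq]
                  exact hGa0
                · rw [h, ← heq, ← hlm]
                  exact hGa1
              exact hGAu'
          exact hnosub u hu v hv huv (by rw [hNeq])
        exact hcrit ⟨hne0, hac, hca⟩
end

section
/- Let G be a finite graph, w a normal weighting of G, and u, v ∈ V(G) distinct with N(u) ⊆ N[v]. Let G' = G - u and let w' be the weighting of G' agreeing with w except that w'(v) = w(u) + w(v). Then every w'-balanced separator S of G' with v ∉ S is a w-balanced separator of G. -/
open SimpleGraph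

variable {V : Type}

private lemma reach_refl' {G : SimpleGraph V} {S : Set V} {a : V} (ha : a ∉ S) :
    ReachOutside G S a a :=
  ⟨SimpleGraph.Walk.nil, by simp [ha]⟩

private lemma reach_trans' {G : SimpleGraph V} {S : Set V} {a b c : V}
    (h1 : ReachOutside G S a b) (h2 : ReachOutside G S b c) :
    ReachOutside G S a c := by
  obtain ⟨p, hp⟩ := h1
  obtain ⟨q, hq⟩ := h2
  refine ⟨p.append q, fun x hx => ?_⟩
  rw [Walk.support_append, List.mem_append] at hx
  rcases hx with hx | hx
  · exact hp x hx
  · exact hq x (List.mem_of_mem_tail hx)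

private lemma reach_adj' {G : SimpleGraph V} {S : Set V} {a b : V}
    (h : G.Adj a b) (ha : a ∉ S) (hb : b ∉ S) :
    ReachOutside G S a b := by
  refine ⟨Walk.cons h Walk.nil, ?_⟩
  intro x hx
  simp only [Walk.support_cons, Walk.support_nil, List.mem_cons, List.mem_singleton] at hx
  rcases hx with rfl | hx | h'
  · exact ha
  · exact hx ▸ hb
  · exact absurd h' List.not_mem_nil

private lemma push_walk' [DecidableEq V] (G : SimpleGraph V) (u v : V) (huv : u ≠ v)
    (hN : G.neighborSet u ⊆ insert v (G.neighborSet v))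
    (S : Set V) (hv : v ∉ S) {a₀ b₀ : V}
    (p : G.Walk a₀ b₀) (hp : ∀ x ∈ p.support, x ∉ S) :
    ReachOutside (G.induce {x : V | x ≠ u}) (Subtype.val ⁻¹' S)
      (if h : a₀ = u then ⟨v, Ne.symm huv⟩ else ⟨a₀, h⟩)
      (if h : b₀ = u then ⟨v, Ne.symm huv⟩ else ⟨b₀, h⟩) := by
  induction p with
  | nil =>
    rename_i d
    have hd : d ∉ S := hp d (by simp)
    apply reach_refl'
    by_cases h : d = u <;> simp [h, hv, hd]
  | @cons a c b hadj p ih =>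
    have ha : a ∉ S := hp a (by simp)
    have hp' : ∀ x ∈ p.support, x ∉ S := fun x hx => hp x (by simp [hx])
    have hc : c ∉ S := hp' c (by simp)
    refine reach_trans' ?_ (ih hp')
    by_cases hau : a = u
    · have hcu : c ≠ u := fun h => (hau ▸ h ▸ hadj).ne rfl
      have hcN : c ∈ insert v (G.neighborSet v) := hN (hau ▸ hadj)
      rw [dif_pos hau, dif_neg hcu]
      rcases Set.mem_insert_iff.mp hcN with rfl | hcv
      · exact reach_refl' (by simpa using hv)
      · exact reach_adj' (by simpa using hcv) (by simpa using hv) (by simpa using hc)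
    · by_cases hcu : c = u
      · have haN : a ∈ insert v (G.neighborSet v) := hN (hcu ▸ hadj.symm)
        rw [dif_neg hau, dif_pos hcu]
        rcases Set.mem_insert_iff.mp haN with rfl | hav
        · exact reach_refl' (by simpa using hv)
        · exact reach_adj' (by simpa using hav.symm) (by simpa using ha) (by simpa using hv)
      · rw [dif_neg hau, dif_neg hcu]
        exact reach_adj' (by simpa using hadj) (by simpa using ha) (by simpa using hc)

private lemma setWeight_subtype' [Finite V] [DecidableEq V] (u v : V) (w : V → ℝ)
    (A : Set {x : V | x ≠ u}) :
    setWeight (fun x : {x : V | x ≠ u} => if (x : V) = v then w u + w v else w (x : V)) A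
      = (∑ x ∈ ((Set.toFinite A).toFinset).image Subtype.val, w x)
        + (if v ∈ ((Set.toFinite A).toFinset).image Subtype.val then w u else 0) := by
  classical
  rw [setWeight,
    ← Finset.sum_image (g := Subtype.val) (s := (Set.toFinite A).toFinset)
      (f := fun x => if x = v then w u + w v else w x)
      (by intro x _ y _ h; exact Subtype.ext h),
    ← Finset.sum_ite_eq' _ v (fun _ => w u), ← Finset.sum_add_distrib]
  refine Finset.sum_congr rfl fun x _ => ?_
  by_cases h : x = v <;> simp [h]; ring

private lemma setWeight_subtype_univ' [Finite V] [DecidableEq V] (u v : V) (huv : u ≠ v)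
    (w : V → ℝ) :
    setWeight (fun x : {x : V | x ≠ u} => if (x : V) = v then w u + w v else w (x : V))
      (Set.univ : Set {x : V | x ≠ u}) = setWeight w (Set.univ : Set V) := by
  rw [setWeight_subtype' u v w]
  set U := ((Set.toFinite (Set.univ : Set {x : V | x ≠ u})).toFinset).image Subtype.val with hU
  have hvU : v ∈ U := Finset.mem_image.mpr ⟨⟨v, Ne.symm huv⟩, by simp, rfl⟩
  have huU : u ∉ U := by
    simp only [hU, Finset.mem_image]
    rintro ⟨y, -, hy⟩
    exact y.2 hy
  have hins : insert u U = (Set.toFinite (Set.univ : Set V)).toFinset := by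
    ext x
    simp only [Finset.mem_insert, Set.Finite.mem_toFinset, Set.mem_univ, iff_true, hU,
      Finset.mem_image]
    by_cases h : x = u
    · exact Or.inl h
    · exact Or.inr ⟨⟨x, h⟩, by simp, rfl⟩
  rw [if_pos hvU, setWeight, ← hins, Finset.sum_insert huU]
  ring

/-- identifying a vertex with a dominated neighbourhood. -/
theorem identify_siblings [Finite V] [DecidableEq V] (G : SimpleGraph V)
    (w : V → ℝ) (hw0 : ∀ v, 0 ≤ w v) (hw1 : setWeight w (Set.univ : Set V) = 1)
    (u v : V) (huv : u ≠ v)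
    (hN : G.neighborSet u ⊆ insert v (G.neighborSet v))
    (S : Set V) (hu : u ∉ S) (hv : v ∉ S)
    (hS' : IsBalancedSep (G.induce {x : V | x ≠ u})
      (fun x => if (x : V) = v then w u + w v else w (x : V))
      (Subtype.val ⁻¹' S)) :
    IsBalancedSep G w S := by
  classical
  intro z hz
  set fz : {x : V | x ≠ u} := if h : z = u then ⟨v, Ne.symm huv⟩ else ⟨z, h⟩ with hfzdef
  have hfzS : fz ∉ Subtype.val ⁻¹' S := by
    by_cases h : z = u <;> simp [hfzdef, h, hv, hz]
  have hbound := hS' fz hfzS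
  set C' := {y : {x : V | x ≠ u} |
      ReachOutside (G.induce {x : V | x ≠ u}) (Subtype.val ⁻¹' S) y fz} with hC'def
  have hpush : ∀ x : V, ReachOutside G S x z →
      (if h : x = u then (⟨v, Ne.symm huv⟩ : {x : V | x ≠ u}) else ⟨x, h⟩) ∈ C' := by
    rintro x ⟨p, hp⟩
    exact push_walk' G u v huv hN S hv p hp
  set T : Finset V := ((Set.toFinite C').toFinset).image Subtype.val with hTdef
  have hmemT : ∀ x : V, ∀ h : x ≠ u, ReachOutside G S x z → x ∈ T := by
    intro x h hr
    have := hpush x hr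
    rw [dif_neg h] at this
    exact Finset.mem_image.mpr ⟨⟨x, h⟩, by simpa using this, rfl⟩
  have key : setWeight w {x | ReachOutside G S x z}
      ≤ (∑ x ∈ T, w x) + (if v ∈ T then w u else 0) := by
    by_cases huC : ReachOutside G S u z
    · have hvT : v ∈ T := by
        have := hpush u huC
        rw [dif_pos rfl] at this
        exact Finset.mem_image.mpr ⟨⟨v, Ne.symm huv⟩, by simpa using this, rfl⟩
      have huF : u ∈ (Set.toFinite {x | ReachOutside G S x z}).toFinset := by
        simpa using huC
      rw [setWeight, ← Finset.add_sum_erase _ w huF, if_pos hvT, add_comm]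
      refine add_le_add ?_ le_rfl
      refine Finset.sum_le_sum_of_subset_of_nonneg ?_ (fun i _ _ => hw0 i)
      intro x hx
      rw [Finset.mem_erase, Set.Finite.mem_toFinset] at hx
      exact hmemT x hx.1 hx.2
    · have hle : setWeight w {x | ReachOutside G S x z} ≤ ∑ x ∈ T, w x := by
        rw [setWeight]
        refine Finset.sum_le_sum_of_subset_of_nonneg ?_ (fun i _ _ => hw0 i)
        intro x hx
        rw [Set.Finite.mem_toFinset] at hx
        have hxu : x ≠ u := fun h => huC (h ▸ hx)
        exact hmemT x hxu hx
      refine hle.trans (le_add_of_nonneg_right ?_)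
      by_cases h : v ∈ T <;> simp [h, hw0 u]
  calc setWeight w {x | ReachOutside G S x z}
      ≤ (∑ x ∈ T, w x) + (if v ∈ T then w u else 0) := key
    _ = setWeight (fun x : {x : V | x ≠ u} =>
          if (x : V) = v then w u + w v else w (x : V)) C' := by
        rw [setWeight_subtype' u v w C', hTdef]
    _ ≤ setWeight (fun x : {x : V | x ≠ u} =>
          if (x : V) = v then w u + w v else w (x : V))
          (Set.univ : Set {x : V | x ≠ u}) / 2 := hbound
    _ = setWeight w (Set.univ : Set V) / 2 := by
        rw [setWeight_subtype_univ' u v huv w]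
end
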